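/- arXiv:1605.02728 — 3 statements merged into one kernel-verified Lean document; each statement's English description precedes it below -/
import Mathlib

section
/- For 0 < q < 1 and all complex z with z ≠ q^{-n} for n = 0,1,2,..., one has (-z;q)_∞ = ∑_{n=0}^∞ (q^{2n²-n} z^{2n}/(q²;q²)_n) · A_q(-q^{2n-1} z), where A_q(z) = ∑_{k=0}^∞ (-z)^k q^{k²}/(q;q)_k is the Ramanujan entire function. -/
noncomputable def qpC (q a : ℂ) (n : ℕ) : ℂ := ∏ k ∈ Finset.range n, (1 - a * q ^ k)

noncomputable def qpiC (q a : ℂ) : ℂ := ∏' k : ℕ, (1 - a * q ^ k)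

noncomputable def Aq (q : ℝ) (z : ℂ) : ℂ :=
  ∑' k : ℕ, (q : ℂ) ^ (k ^ 2) * (-z) ^ k / qpC (q : ℂ) (q : ℂ) k

namespace QE
open Finset Filter

def C2 : ℕ → ℕ
  | 0 => 0
  | n + 1 => C2 n + n

lemma C2_add (a b : ℕ) : C2 (a + b) = C2 a + C2 b + a * b := by
  induction b with
  | zero => simp [C2]
  | succ b ih => show C2 ((a+b)+1) = _; rw [C2, ih, C2]; ring

lemma C2_eq' (n : ℕ) : 2 * C2 n + n = n * n := by
  induction n with
  | zero => rfl
  | succ n ih => rw [C2]; ring_nf; ring_nf at ih; nlinarith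

lemma C2_two_mul (n : ℕ) : C2 (2 * n) = n * (2 * n - 1) := by
  have h := C2_eq' (2*n)
  cases n with
  | zero => rfl
  | succ m =>
    have e : 2*(m+1) - 1 = 2*m+1 := by omega
    rw [e]; nlinarith [h]


def eqv : (Σ m : ℕ, Fin (m/2+1)) ≃ ℕ × ℕ where
  toFun p := (p.2.1, p.1 - 2*p.2.1)
  invFun p := ⟨2*p.1+p.2, ⟨p.1, by omega⟩⟩
  left_inv := by
    rintro ⟨m, ⟨i, hi⟩⟩
    have h1 : 2*i + (m - 2*i) = m := by omega
    exact Sigma.ext h1 ((Fin.heq_ext_iff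
      (show (2*i + (m - 2*i))/2+1 = m/2+1 by rw [h1])).2 rfl)
  right_inv := by
    rintro ⟨n, k⟩
    show (n, 2*n+k - 2*n) = (n, k)
    congr 1
    omega

section Main
variable (q : ℝ)

local notation "Q" => (q : ℂ)

lemma one_sub_pow_ne (hq0 : 0 < q) (hq1 : q < 1) {j : ℕ} (hj : j ≠ 0) : (1 : ℂ) - Q ^ j ≠ 0 := by
  have h1 : q ^ j < 1 := pow_lt_one₀ hq0.le hq1 hj
  have : (1 : ℂ) - Q ^ j = ((1 - q ^ j : ℝ) : ℂ) := by push_cast; ring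
  rw [this]
  exact_mod_cast (by linarith : (1 - q^j : ℝ) ≠ 0)

lemma qpC_succ (m : ℕ) : qpC Q Q (m+1) = qpC Q Q m * (1 - Q ^ (m+1)) := by
  rw [qpC, Finset.prod_range_succ, ← qpC, pow_succ']

lemma qpC2_succ (n : ℕ) : qpC (Q^2) (Q^2) (n+1) = qpC (Q^2) (Q^2) n * (1 - Q ^ (2*n+2)) := by
  rw [qpC, Finset.prod_range_succ, ← qpC, ← pow_mul, pow_add]; ring

lemma qpC_ne (hq0 : 0 < q) (hq1 : q < 1) (m : ℕ) : qpC Q Q m ≠ 0 := by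
  induction m with
  | zero => simp [qpC]
  | succ m ih =>
    rw [qpC_succ]
    exact mul_ne_zero ih (one_sub_pow_ne q hq0 hq1 (Nat.succ_ne_zero m))

lemma qpC2_ne (hq0 : 0 < q) (hq1 : q < 1) (n : ℕ) : qpC (Q^2) (Q^2) n ≠ 0 := by
  induction n with
  | zero => simp [qpC]
  | succ n ih =>
    rw [qpC2_succ]
    exact mul_ne_zero ih (one_sub_pow_ne q hq0 hq1 (by omega))

noncomputable def gg (n : ℕ) : ℂ := (qpC (Q^2) (Q^2) n)⁻¹

noncomputable def hh (k : ℕ) : ℂ := Q ^ (C2 k) * (qpC Q Q k)⁻¹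

lemma hh_rec (hq0 : 0 < q) (hq1 : q < 1) (k : ℕ) :
    (1 - Q ^ (k+1)) * hh q (k+1) = Q ^ k * hh q k := by
  have hne := qpC_ne q hq0 hq1 k
  have hne1 := one_sub_pow_ne q hq0 hq1 (Nat.succ_ne_zero k)
  rw [hh, hh, qpC_succ]
  have : C2 (k+1) = C2 k + k := rfl
  rw [this]
  field_simp
  ring

lemma gg_rec (hq0 : 0 < q) (hq1 : q < 1) (n : ℕ) :
    (1 - Q ^ (2*n+2)) * gg q (n+1) = gg q n := by
  have hne := qpC2_ne q hq0 hq1 n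
  have hne1 := one_sub_pow_ne q hq0 hq1 (show 2*n+2 ≠ 0 by omega)
  rw [gg, gg, qpC2_succ]
  field_simp

noncomputable def V (m : ℕ) : ℂ := ∑ n ∈ range (m/2+1), gg q n * hh q (m - 2*n)

noncomputable def W (m : ℕ) : ℂ := ∑ n ∈ range (m/2+1), Q ^ (m - 2*n) * (gg q n * hh q (m - 2*n))

variable (hq0 : 0 < q) (hq1 : q < 1)
include hq0 hq1

lemma L1 (m : ℕ) :
    ∑ n ∈ range ((m+1)/2+1), (1 - Q^(m+1-2*n)) * (gg q n * hh q (m+1-2*n)) = W q m := by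
  have key : ∀ n ∈ range (m/2+1),
      (1 - Q^(m+1-2*n)) * (gg q n * hh q (m+1-2*n)) = Q^(m-2*n) * (gg q n * hh q (m-2*n)) := by
    intro n hn
    rw [mem_range] at hn
    have h2n : 2*n ≤ m := by omega
    rw [show m+1-2*n = (m-2*n)+1 by omega, mul_left_comm, hh_rec q hq0 hq1, mul_left_comm]
  rcases Nat.even_or_odd m with ⟨t, ht⟩ | ⟨t, ht⟩
  · rw [show (m+1)/2 = m/2 by omega]
    exact Finset.sum_congr rfl key
  · rw [show (m+1)/2+1 = (m/2+1)+1 by omega, Finset.sum_range_succ,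
      show m+1-2*(m/2+1) = 0 by omega]
    simp only [pow_zero, sub_self, zero_mul, add_zero]
    exact Finset.sum_congr rfl key

lemma L2 (m : ℕ) :
    ∑ n ∈ range ((m+2)/2+1), Q^(m+2-2*n) * ((1 - Q^(2*n)) * (gg q n * hh q (m+2-2*n))) = W q m := by
  rw [show (m+2)/2+1 = (m/2+1)+1 by omega, Finset.sum_range_succ']
  simp only [mul_zero, pow_zero, sub_self, zero_mul, add_zero]
  apply Finset.sum_congr rfl
  intro n hn
  rw [mem_range] at hn
  have h2n : 2*n ≤ m := by omega
  rw [show m+2-2*(n+1) = m-2*n by omega, show 2*(n+1) = 2*n+2 by ring]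
  linear_combination (Q^(m-2*n) * hh q (m-2*n)) * gg_rec q hq0 hq1 n

lemma main_rec (m : ℕ) : (1 - Q^(m+1)) * V q (m+1) = V q m := by
  have split : (1 - Q^(m+1)) * V q (m+1) =
      (∑ n ∈ range ((m+1)/2+1), (1 - Q^(m+1-2*n)) * (gg q n * hh q (m+1-2*n)))
      + ∑ n ∈ range ((m+1)/2+1), Q^(m+1-2*n) * ((1 - Q^(2*n)) * (gg q n * hh q (m+1-2*n))) := by
    rw [V, Finset.mul_sum, ← Finset.sum_add_distrib]
    apply Finset.sum_congr rfl
    intro n hn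
    rw [mem_range] at hn
    have h2n : 2*n ≤ m+1 := by omega
    have hp : Q^(m+1-2*n) * Q^(2*n) = Q^(m+1) := by
      rw [← pow_add]; congr 1; omega
    have : (1 - Q^(m+1)) = (1 - Q^(m+1-2*n)) + Q^(m+1-2*n) * (1 - Q^(2*n)) := by
      rw [mul_sub, hp]; ring
    rw [this]; ring
  have vsplit : ∀ M : ℕ, V q M = (∑ n ∈ range (M/2+1), (1 - Q^(M-2*n)) * (gg q n * hh q (M-2*n))) + W q M := by
    intro M
    rw [V, W, ← Finset.sum_add_distrib]
    apply Finset.sum_congr rfl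
    intro n hn
    ring
  rw [split, L1 q hq0 hq1]
  cases m with
  | zero =>
    have : V q 0 = W q 0 := by
      have := vsplit 0
      simp only [Nat.zero_div, zero_add, range_one, sum_singleton, Nat.sub_zero, Nat.mul_zero,
        pow_zero, sub_self, zero_mul, mul_zero] at this ⊢
      simpa using this
    rw [this]
    simp [show (0+1)/2+1 = 1 by norm_num]
  | succ m' =>
    rw [show m'+1+1 = m'+2 by ring, L2 q hq0 hq1, vsplit (m'+1), L1 q hq0 hq1 m']
    ring

lemma V_eq (m : ℕ) : V q m = (qpC Q Q m)⁻¹ := by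
  induction m with
  | zero => simp [V, gg, hh, qpC, C2]
  | succ m ih =>
    have h := main_rec q hq0 hq1 m
    rw [ih] at h
    have hne1 := one_sub_pow_ne q hq0 hq1 (Nat.succ_ne_zero m)
    have hne := qpC_ne q hq0 hq1 m
    rw [qpC_succ, mul_inv, ← h]
    field_simp


lemma hQnorm : ‖(Q : ℂ)‖ = q := by
  rw [Complex.norm_real, Real.norm_eq_abs, abs_of_pos hq0]

lemma hQne : (Q : ℂ) ≠ 0 := by
  exact_mod_cast (ne_of_gt hq0)

lemma norm_one_sub_pow {j : ℕ} (hj : j ≠ 0) : ‖(1:ℂ) - Q^j‖ = 1 - q^j := by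
  have h1 : q ^ j < 1 := pow_lt_one₀ hq0.le hq1 hj
  rw [show (1:ℂ) - Q^j = ((1 - q^j : ℝ) : ℂ) by push_cast; ring, Complex.norm_real,
    Real.norm_eq_abs, abs_of_pos (by linarith)]

lemma one_sub_q_pos : 0 < 1 - q := by linarith

lemma ratio_summable {E : Type*} [NormedAddCommGroup E] [CompleteSpace E] (K : ℝ) (f : ℕ → E)
    (h : ∀ n, ‖f (n+1)‖ ≤ K * q^n * ‖f n‖) : Summable f := by
  have h0 : Filter.Tendsto (fun n : ℕ => K * q^n) atTop (nhds 0) := by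
    simpa using (tendsto_pow_atTop_nhds_zero_of_lt_one hq0.le hq1).const_mul K
  apply summable_of_ratio_norm_eventually_le (r := 1/2) (by norm_num)
  filter_upwards [h0.eventually (gt_mem_nhds (by norm_num : (0:ℝ) < 1/2))] with n hn
  calc ‖f (n+1)‖ ≤ K * q^n * ‖f n‖ := h n
    _ ≤ 1/2 * ‖f n‖ := mul_le_mul_of_nonneg_right hn.le (norm_nonneg _)

lemma hh_norm_succ (k : ℕ) : ‖hh q (k+1)‖ ≤ (1-q)⁻¹ * q^k * ‖hh q k‖ := by
  have h := congrArg norm (hh_rec q hq0 hq1 k)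
  rw [norm_mul, norm_mul, norm_pow, hQnorm q hq0 hq1,
    norm_one_sub_pow q hq0 hq1 (Nat.succ_ne_zero k)] at h
  simp only [Nat.succ_eq_add_one] at h
  have h1 : (0:ℝ) < 1 - q^(k+1) := by
    have : q ^ (k+1) < 1 := pow_lt_one₀ hq0.le hq1 (Nat.succ_ne_zero k)
    linarith
  have h2 : 1 - q ≤ 1 - q^(k+1) := by
    have : q ^ (k+1) ≤ q := pow_le_of_le_one hq0.le hq1.le (Nat.succ_ne_zero k)
    linarith
  have h3 : ‖hh q (k+1)‖ = (1 - q^(k+1))⁻¹ * (q^k * ‖hh q k‖) := by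
    rw [inv_mul_eq_div, eq_div_iff (ne_of_gt h1)]
    linear_combination h
  rw [h3, mul_assoc]
  exact mul_le_mul_of_nonneg_right (inv_anti₀ (one_sub_q_pos q hq0 hq1) h2)
    (by positivity)

lemma gg_norm_succ (n : ℕ) : ‖gg q (n+1)‖ ≤ (1-q)⁻¹ * ‖gg q n‖ := by
  have h := congrArg norm (gg_rec q hq0 hq1 n)
  rw [norm_mul, norm_one_sub_pow q hq0 hq1 (show 2*n+2 ≠ 0 by omega)] at h
  have h1 : (0:ℝ) < 1 - q^(2*n+2) := by
    have : q ^ (2*n+2) < 1 := pow_lt_one₀ hq0.le hq1 (by omega)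
    linarith
  have h2 : 1 - q ≤ 1 - q^(2*n+2) := by
    have : q ^ (2*n+2) ≤ q := pow_le_of_le_one hq0.le hq1.le (by omega)
    linarith
  have h3 : ‖gg q (n+1)‖ = (1 - q^(2*n+2))⁻¹ * ‖gg q n‖ := by
    rw [inv_mul_eq_div, eq_div_iff (ne_of_gt h1)]
    linear_combination h
  rw [h3]
  exact mul_le_mul_of_nonneg_right (inv_anti₀ (one_sub_q_pos q hq0 hq1) h2)
    (norm_nonneg _)

noncomputable def FF (w : ℂ) : ℂ := ∑' m : ℕ, hh q m * w ^ m

omit hq0 hq1 in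
lemma hh0 : hh q 0 = 1 := by simp [hh, C2, qpC]

lemma sumFF (w : ℂ) : Summable (fun m : ℕ => hh q m * w ^ m) := by
  apply ratio_summable q hq0 hq1 (K := ‖w‖ * (1-q)⁻¹)
  intro n
  calc ‖hh q (n+1) * w^(n+1)‖ = ‖hh q (n+1)‖ * (‖w‖^n * ‖w‖) := by
        rw [norm_mul, norm_pow, pow_succ]
    _ ≤ ((1-q)⁻¹ * q^n * ‖hh q n‖) * (‖w‖^n * ‖w‖) :=
        mul_le_mul_of_nonneg_right (hh_norm_succ q hq0 hq1 n) (by positivity)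
    _ = (‖w‖ * (1-q)⁻¹) * q^n * (‖hh q n‖ * ‖w‖^n) := by ring
    _ = (‖w‖ * (1-q)⁻¹) * q^n * ‖hh q n * w^n‖ := by rw [norm_mul, norm_pow]

set_option maxHeartbeats 1000000 in
lemma FF_fe (w : ℂ) : FF q w = (1 + w) * FF q (Q * w) := by
  have hs := sumFF q hq0 hq1 w
  have hsq := sumFF q hq0 hq1 (Q * w)
  have h1 : ∀ m : ℕ, hh q (m+1) * w^(m+1)
      = hh q (m+1) * (Q*w)^(m+1) + w * (hh q m * (Q*w)^m) := by
    intro m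
    rw [mul_pow, mul_pow]
    linear_combination (w^(m+1)) * (hh_rec q hq0 hq1 m)
  have e0 : FF q (Q*w) = 1 + ∑' m : ℕ, hh q (m+1) * (Q*w)^(m+1) := by
    have := Summable.tsum_eq_zero_add hsq
    rw [hh0, pow_zero, mul_one] at this
    exact this
  calc FF q w = hh q 0 * w^0 + ∑' m : ℕ, hh q (m+1) * w^(m+1) := Summable.tsum_eq_zero_add hs
    _ = 1 + ∑' m : ℕ, (hh q (m+1) * (Q*w)^(m+1) + w * (hh q m * (Q*w)^m)) := by
        rw [hh0, pow_zero, mul_one]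
        congr 1
        exact tsum_congr h1
    _ = 1 + ((∑' m : ℕ, hh q (m+1)*(Q*w)^(m+1)) + ∑' m : ℕ, w * (hh q m * (Q*w)^m)) := by
        congr 1
        exact Summable.tsum_add ((summable_nat_add_iff 1).2 hsq) (hsq.mul_left w)
    _ = 1 + ((FF q (Q*w) - 1) + w * FF q (Q*w)) := by
        rw [tsum_mul_left]
        congr 2
        linear_combination -e0
    _ = (1 + w) * FF q (Q*w) := by ring

lemma FF_prod (w : ℂ) (N : ℕ) :
    FF q w = (∏ k ∈ range N, (1 + w * Q^k)) * FF q ((Q^N) * w) := by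
  induction N with
  | zero => simp
  | succ N ih =>
    have hfe := FF_fe q hq0 hq1 ((Q^N) * w)
    rw [prod_range_succ, ih, hfe, show (Q : ℂ) * (Q^N * w) = Q^(N+1) * w by ring]
    ring

lemma sum_hh_shift (w : ℂ) : Summable (fun m : ℕ => ‖hh q (m+1)‖ * ‖w‖^m) := by
  apply ratio_summable q hq0 hq1 (K := ‖w‖ * (1-q)⁻¹)
  intro n
  rw [Real.norm_of_nonneg (by positivity), Real.norm_of_nonneg (by positivity)]
  calc ‖hh q (n+2)‖ * ‖w‖^(n+1)
      ≤ ((1-q)⁻¹ * q^(n+1) * ‖hh q (n+1)‖) * ‖w‖^(n+1) :=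
        mul_le_mul_of_nonneg_right (hh_norm_succ q hq0 hq1 (n+1)) (by positivity)
    _ = ((1-q)⁻¹ * ‖hh q (n+1)‖ * ‖w‖^n) * (q^(n+1) * ‖w‖) := by ring
    _ ≤ ((1-q)⁻¹ * ‖hh q (n+1)‖ * ‖w‖^n) * (q^n * ‖w‖) := by
        have hnn : (0:ℝ) ≤ (1-q)⁻¹ * ‖hh q (n+1)‖ * ‖w‖^n :=
          mul_nonneg (mul_nonneg (inv_nonneg.2 (by linarith)) (norm_nonneg _)) (by positivity)
        apply mul_le_mul_of_nonneg_left _ hnn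
        have : q^(n+1) ≤ q^n := pow_le_pow_of_le_one hq0.le hq1.le (Nat.le_succ n)
        exact mul_le_mul_of_nonneg_right this (norm_nonneg _)
    _ = ‖w‖ * (1-q)⁻¹ * q^n * (‖hh q (n+1)‖ * ‖w‖^n) := by ring

set_option maxHeartbeats 1000000 in
lemma FF_bound (w u : ℂ) (hu : ‖u‖ ≤ ‖w‖) :
    ‖FF q u - 1‖ ≤ ‖u‖ * ∑' m : ℕ, ‖hh q (m+1)‖ * ‖w‖^m := by
  have hs := sumFF q hq0 hq1 u
  have hdiff : FF q u - 1 = ∑' m : ℕ, hh q (m+1) * u^(m+1) := by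
    have h0 := Summable.tsum_eq_zero_add hs
    rw [hh0, pow_zero, mul_one] at h0
    rw [FF]
    linear_combination h0
  rw [hdiff]
  have hsn : Summable (fun m : ℕ => ‖hh q (m+1) * u^(m+1)‖) :=
    summable_norm_iff.2 ((summable_nat_add_iff 1).2 hs)
  refine le_trans (norm_tsum_le_tsum_norm hsn) ?_
  rw [← tsum_mul_left]
  apply Summable.tsum_le_tsum _ hsn ((sum_hh_shift q hq0 hq1 w).mul_left ‖u‖)
  intro m
  rw [norm_mul, norm_pow, pow_succ]
  calc ‖hh q (m+1)‖ * (‖u‖^m * ‖u‖)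
      ≤ ‖hh q (m+1)‖ * (‖w‖^m * ‖u‖) := by
        apply mul_le_mul_of_nonneg_left _ (norm_nonneg _)
        exact mul_le_mul_of_nonneg_right (pow_le_pow_left₀ (norm_nonneg u) hu m) (norm_nonneg _)
    _ = ‖u‖ * (‖hh q (m+1)‖ * ‖w‖^m) := by ring

lemma FF_tendsto (w : ℂ) :
    Filter.Tendsto (fun N : ℕ => FF q ((Q^N) * w)) atTop (nhds 1) := by
  rw [tendsto_iff_norm_sub_tendsto_zero]
  apply squeeze_zero (fun N => norm_nonneg _)
    (g := fun N => q^N * (‖w‖ * ∑' m : ℕ, ‖hh q (m+1)‖ * ‖w‖^m))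
  · intro N
    have hle : ‖(Q^N : ℂ) * w‖ ≤ ‖w‖ := by
      rw [norm_mul, norm_pow, hQnorm q hq0 hq1]
      have : q^N ≤ 1 := pow_le_one₀ hq0.le hq1.le
      nlinarith [norm_nonneg w]
    have := FF_bound q hq0 hq1 w ((Q^N) * w) hle
    calc ‖FF q ((Q^N) * w) - 1‖ ≤ ‖(Q^N : ℂ) * w‖ * ∑' m : ℕ, ‖hh q (m+1)‖ * ‖w‖^m := this
      _ = q^N * (‖w‖ * ∑' m : ℕ, ‖hh q (m+1)‖ * ‖w‖^m) := by
          rw [norm_mul, norm_pow, hQnorm q hq0 hq1]; ring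
  · simpa using (tendsto_pow_atTop_nhds_zero_of_lt_one hq0.le hq1).mul_const _

set_option maxHeartbeats 1000000 in
lemma euler (w : ℂ) : ∏' k : ℕ, (1 + w * Q^k) = FF q w := by
  by_cases hzero : ∃ k0 : ℕ, 1 + w * Q^k0 = 0
  · obtain ⟨k0, hk0⟩ := hzero
    have hprod0 : HasProd (fun k : ℕ => 1 + w * Q^k) 0 := by
      rw [HasProd]
      have hev : ∀ᶠ (s : Finset ℕ) in atTop, (0:ℂ) = ∏ i ∈ s, (1 + w * Q^i) :=
        Filter.eventually_atTop.2 ⟨{k0}, fun s hs =>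
          (Finset.prod_eq_zero (hs (Finset.mem_singleton_self k0)) hk0).symm⟩
      exact Filter.Tendsto.congr' hev tendsto_const_nhds
    rw [hprod0.tprod_eq]
    have hp := FF_prod q hq0 hq1 w (k0+1)
    rw [Finset.prod_eq_zero (Finset.self_mem_range_succ k0) hk0, zero_mul] at hp
    exact hp.symm
  · push_neg at hzero
    have hlog : Summable (fun k : ℕ => Complex.log (1 + w * Q^k)) := by
      have htend : Filter.Tendsto (fun k : ℕ => ‖w‖ * q^k) atTop (nhds 0) := by
        simpa using (tendsto_pow_atTop_nhds_zero_of_lt_one hq0.le hq1).const_mul ‖w‖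
      apply Summable.of_norm_bounded_eventually_nat (g := fun k => 3/2 * (‖w‖ * q^k))
      · exact Summable.mul_left _ (Summable.mul_left _ (summable_geometric_of_lt_one hq0.le hq1))
      · filter_upwards [htend.eventually (gt_mem_nhds (by norm_num : (0:ℝ) < 1/2))] with k hk
        have hnorm : ‖w * Q^k‖ = ‖w‖ * q^k := by rw [norm_mul, norm_pow, hQnorm q hq0 hq1]
        have := Complex.norm_log_one_add_half_le_self (z := w * Q^k) (by rw [hnorm]; linarith)
        rw [hnorm] at this
        linarith
    have hmult : Multipliable (fun k : ℕ => 1 + w * Q^k) :=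
      Complex.multipliable_of_summable_log hlog
    have ht := hmult.hasProd.tendsto_prod_nat
    have ht2 := ht.mul (FF_tendsto q hq0 hq1 w)
    have hconst : ∀ N : ℕ, (∏ k ∈ range N, (1 + w * Q^k)) * FF q ((Q^N)*w) = FF q w :=
      fun N => (FF_prod q hq0 hq1 w N).symm
    have := tendsto_nhds_unique ((ht2.congr hconst)) tendsto_const_nhds
    rw [← this, mul_one]

noncomputable def aa (z : ℂ) (n k : ℕ) : ℂ := Q^(C2 (2*n+k)) * z^(2*n+k) * (gg q n * hh q k)

lemma summable_aa (z : ℂ) : Summable (fun p : ℕ × ℕ => aa q z p.1 p.2) := by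
  have hb : Summable (fun n : ℕ => q^(C2 (2*n)) * ‖z‖^(2*n) * ‖gg q n‖) := by
    apply ratio_summable q hq0 hq1 (K := ‖z‖^2 * (1-q)⁻¹)
    intro n
    rw [Real.norm_of_nonneg (by positivity), Real.norm_of_nonneg (by positivity)]
    have e : C2 (2*(n+1)) = C2 (2*n) + (4*n+1) := by
      rw [show 2*(n+1) = 2*n + 2 by ring, C2_add]
      have h2 : C2 2 = 1 := rfl
      omega
    rw [e, pow_add]
    calc q^(C2 (2*n)) * q^(4*n+1) * ‖z‖^(2*(n+1)) * ‖gg q (n+1)‖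
        ≤ q^(C2 (2*n)) * q^(4*n+1) * ‖z‖^(2*(n+1)) * ((1-q)⁻¹ * ‖gg q n‖) :=
          mul_le_mul_of_nonneg_left (gg_norm_succ q hq0 hq1 n) (by positivity)
      _ = (‖z‖^2*(1-q)⁻¹) * q^(4*n+1) * (q^(C2 (2*n)) * ‖z‖^(2*n) * ‖gg q n‖) := by
          rw [show 2*(n+1) = 2*n+2 by ring, pow_add]; ring
      _ ≤ (‖z‖^2*(1-q)⁻¹) * q^n * (q^(C2 (2*n)) * ‖z‖^(2*n) * ‖gg q n‖) := by
          have h4 : q^(4*n+1) ≤ q^n := pow_le_pow_of_le_one hq0.le hq1.le (by omega)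
          have hnn1 : (0:ℝ) ≤ ‖z‖^2*(1-q)⁻¹ :=
            mul_nonneg (by positivity) (inv_nonneg.2 (by linarith))
          have hnn2 : (0:ℝ) ≤ q^(C2 (2*n)) * ‖z‖^(2*n) * ‖gg q n‖ := by positivity
          exact mul_le_mul_of_nonneg_right (mul_le_mul_of_nonneg_left h4 hnn1) hnn2
  have hc : Summable (fun k : ℕ => q^(C2 k) * ‖z‖^k * ‖hh q k‖) := by
    apply ratio_summable q hq0 hq1 (K := ‖z‖ * (1-q)⁻¹)
    intro k
    rw [Real.norm_of_nonneg (by positivity), Real.norm_of_nonneg (by positivity)]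
    rw [show C2 (k+1) = C2 k + k from rfl, pow_add, pow_succ]
    calc q^(C2 k) * q^k * (‖z‖^k * ‖z‖) * ‖hh q (k+1)‖
        ≤ q^(C2 k) * q^k * (‖z‖^k * ‖z‖) * ((1-q)⁻¹ * q^k * ‖hh q k‖) :=
          mul_le_mul_of_nonneg_left (hh_norm_succ q hq0 hq1 k) (by positivity)
      _ = (‖z‖*(1-q)⁻¹) * q^k * (q^(C2 k) * ‖z‖^k * ‖hh q k‖) * q^k := by ring
      _ ≤ (‖z‖*(1-q)⁻¹) * q^k * (q^(C2 k) * ‖z‖^k * ‖hh q k‖) * 1 := by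
          apply mul_le_mul_of_nonneg_left (pow_le_one₀ hq0.le hq1.le)
          have : (0:ℝ) ≤ (‖z‖*(1-q)⁻¹) :=
            mul_nonneg (norm_nonneg _) (inv_nonneg.2 (by linarith))
          positivity
      _ = (‖z‖*(1-q)⁻¹) * q^k * (q^(C2 k) * ‖z‖^k * ‖hh q k‖) := mul_one _
  have hbc := Summable.mul_of_nonneg hb hc
    (fun n => by positivity) (fun k => by positivity)
  apply Summable.of_norm_bounded hbc
  rintro ⟨n, k⟩
  have hval : ‖aa q z n k‖ =
      (q^(C2 (2*n)) * ‖z‖^(2*n) * ‖gg q n‖) * ((q^(C2 k) * ‖z‖^k * ‖hh q k‖)) * q^(2*n*k) := by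
    rw [aa, norm_mul, norm_mul, norm_pow, norm_pow, hQnorm q hq0 hq1, norm_mul,
      C2_add, pow_add, pow_add, pow_add]
    ring
  rw [hval]
  calc _ ≤ (q^(C2 (2*n)) * ‖z‖^(2*n) * ‖gg q n‖) * ((q^(C2 k) * ‖z‖^k * ‖hh q k‖)) * 1 :=
        mul_le_mul_of_nonneg_left (pow_le_one₀ hq0.le hq1.le) (by positivity)
    _ = _ := mul_one _

lemma regroup (z : ℂ) :
    ∑' (p : ℕ × ℕ), aa q z p.1 p.2 = ∑' m : ℕ, Q^(C2 m) * z^m * V q m := by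
  have hsum := summable_aa q hq0 hq1 z
  have h1 : ∑' (p : ℕ × ℕ), aa q z p.1 p.2
      = ∑' (s : Σ m : ℕ, Fin (m/2+1)), aa q z (eqv s).1 (eqv s).2 :=
    (eqv.tsum_eq (fun p : ℕ × ℕ => aa q z p.1 p.2)).symm
  rw [h1]
  have h2 : ∑' (s : Σ m : ℕ, Fin (m/2+1)), aa q z (eqv s).1 (eqv s).2
      = ∑' (m : ℕ) (i : Fin (m/2+1)), aa q z (eqv ⟨m,i⟩).1 (eqv ⟨m,i⟩).2 :=
    Summable.tsum_sigma' (fun m => (hasSum_fintype _).summable) (eqv.summable_iff.2 hsum)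
  rw [h2]
  apply tsum_congr
  intro m
  rw [tsum_fintype]
  have h2 : ∀ i : Fin (m/2+1), aa q z (eqv ⟨m,i⟩).1 (eqv ⟨m,i⟩).2
      = aa q z i.1 (m - 2*i.1) := fun i => rfl
  rw [Finset.sum_congr rfl (fun i _ => h2 i), Fin.sum_univ_eq_sum_range
    (fun j => aa q z j (m - 2*j)) (m/2+1), V, mul_sum]
  apply Finset.sum_congr rfl
  intro n hn
  rw [mem_range] at hn
  rw [aa, show 2*n + (m - 2*n) = m by omega]

lemma term_eq (z : ℂ) (n : ℕ) :
    Q ^ (n * (2 * n - 1)) * z ^ (2 * n) / qpC (Q^2) (Q^2) n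
      * Aq q (-Q ^ (2 * (n : ℤ) - 1) * z)
    = ∑' k : ℕ, aa q z n k := by
  have hQ : (Q : ℂ) ≠ 0 := hQne q hq0 hq1
  rw [Aq, ← tsum_mul_left]
  apply tsum_congr
  intro k
  simp only [neg_mul, neg_neg]
  have hpow : Q^(n*(2*n-1)) * (Q^(k^2) * (Q^(2*(n:ℤ)-1))^k)
      = Q^(C2 (2*n+k)) * Q^(C2 k) := by
    rw [← zpow_natCast (Q : ℂ) (n*(2*n-1)), ← zpow_natCast (Q : ℂ) (k^2),
      ← zpow_natCast (Q : ℂ) (C2 (2*n+k)), ← zpow_natCast (Q : ℂ) (C2 k),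
      ← zpow_natCast ((Q : ℂ)^(2*(n:ℤ)-1)) k, ← zpow_mul, ← zpow_add₀ hQ, ← zpow_add₀ hQ, ← zpow_add₀ hQ]
    congr 1
    have e1 : C2 (2*n+k) = n*(2*n-1) + C2 k + 2*n*k := by rw [C2_add, C2_two_mul]
    have e2 : (2 * (C2 k : ℤ) + k) = (k : ℤ) * k := by exact_mod_cast C2_eq' k
    push_cast [e1]
    linear_combination -e2
  rw [div_eq_mul_inv, div_eq_mul_inv, aa, gg, hh, mul_pow]
  linear_combination (z^(2*n) * z^k * (qpC (Q^2) (Q^2) n)⁻¹ * (qpC Q Q k)⁻¹) * hpow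

end Main
end QE


theorem qexp_as_Aq_sum (q : ℝ) (hq0 : 0 < q) (hq1 : q < 1) (z : ℂ)
    (hz : ∀ n : ℕ, z ≠ (q : ℂ) ^ (-(n : ℤ))) :
    qpiC (q : ℂ) (-z) =
      ∑' n : ℕ, (q : ℂ) ^ (n * (2 * n - 1)) * z ^ (2 * n) /
          qpC ((q : ℂ) ^ 2) ((q : ℂ) ^ 2) n *
        Aq q (-(q : ℂ) ^ (2 * (n : ℤ) - 1) * z) := by
  have h1 : qpiC (q:ℂ) (-z) = ∏' k : ℕ, (1 + z * (q:ℂ)^k) := by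
    rw [qpiC]
    exact tprod_congr (fun k => by ring)
  have hFF : QE.FF q z = ∑' m : ℕ, QE.hh q m * z^m := rfl
  have h2 : ∀ m : ℕ, QE.hh q m * z^m = (q:ℂ)^(QE.C2 m) * z^m * QE.V q m := by
    intro m
    rw [QE.V_eq q hq0 hq1 m, QE.hh]
    ring
  rw [h1, QE.euler q hq0 hq1 z, hFF, tsum_congr h2, ← QE.regroup q hq0 hq1 z,
    Summable.tsum_prod' (QE.summable_aa q hq0 hq1 z) ((QE.summable_aa q hq0 hq1 z).prod_factor)]
  exact tsum_congr (fun n => (QE.term_eq q hq0 hq1 z n).symm)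
end

section
/- For 0 < q < 1 and all complex z, A_{q²}(-z²/q) = (z;q)_∞ ∑_{n=0}^∞ q^{n(n-1)/2} z^n / ((q;q)_n (z;q)_n), where A_q(w) = ∑_{k=0}^∞ q^{k²}(-w)^k/(q;q)_k, provided z is not of the form q^{-m} for a nonnegative integer m. -/
open Finset Filter Topology

section Aux
variable {q : ℝ}

lemma norm_mul_qpow (hq0 : 0 < q) (a : ℂ) (k : ℕ) : ‖a * (q:ℂ)^k‖ = ‖a‖ * q^k := by
  rw [norm_mul, norm_pow, Complex.norm_real, Real.norm_eq_abs, abs_of_pos hq0]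

lemma multipliable_qp (hq0 : 0 < q) (hq1 : q < 1) (a : ℂ) :
    Multipliable (fun k : ℕ => 1 - a * (q:ℂ)^k) := by
  by_cases h : ∀ k : ℕ, (1:ℂ) - a * (q:ℂ)^k ≠ 0
  · exact (fun (hs : Unit → Summable (fun k : ℕ => Complex.log (1 - a * (q:ℂ)^k))) (u : Unit) =>
      Complex.multipliable_of_summable_log (hs u))
      (fun _ => by
        apply Summable.of_norm_bounded_eventually_nat
          (g := fun k => (3/2) * (‖a‖ * q^k))
        · exact (Summable.mul_left _ ((summable_geometric_of_lt_one hq0.le hq1).mul_left ‖a‖))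
        · have ht : Tendsto (fun k : ℕ => ‖a‖ * q ^ k) atTop (𝓝 0) := by
            simpa using (tendsto_pow_atTop_nhds_zero_of_lt_one hq0.le hq1).const_mul ‖a‖
          filter_upwards [ht.eventually_le_const (by norm_num : (0:ℝ) < 1/2)] with k hk
          have h2 : ‖-(a * (q:ℂ)^k)‖ ≤ 1/2 := by rw [norm_neg, norm_mul_qpow hq0]; exact hk
          have h3 := Complex.norm_log_one_add_half_le_self h2
          rw [show (1:ℂ) + -(a * (q:ℂ)^k) = 1 - a*(q:ℂ)^k by ring] at h3
          refine h3.trans ?_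
          rw [norm_neg, norm_mul_qpow hq0]) ()
  · push_neg at h
    obtain ⟨k0, hk0⟩ := h
    refine ⟨0, ?_⟩
    refine Tendsto.congr' ?_ (tendsto_const_nhds : Tendsto _ _ (𝓝 (0:ℂ)))
    filter_upwards [eventually_ge_atTop {k0}] with s hs
    exact (Finset.prod_eq_zero (hs (Finset.mem_singleton_self k0)) hk0).symm

lemma tendsto_qpC (hq0 : 0 < q) (hq1 : q < 1) (a : ℂ) :
    Tendsto (fun n => qpC (q:ℂ) a n) atTop (𝓝 (qpiC (q:ℂ) a)) :=
  (multipliable_qp hq0 hq1 a).hasProd.tendsto_prod_nat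

lemma qpiC_split (hq0 : 0 < q) (hq1 : q < 1) (a : ℂ) :
    qpiC (q:ℂ) a = (1 - a) * qpiC (q:ℂ) (a * (q:ℂ)) := by
  have hm : Multipliable (fun n : ℕ => (1:ℂ) - a * (q:ℂ)^(n+1)) :=
    (multipliable_qp hq0 hq1 (a * (q:ℂ))).congr fun n => by rw [pow_succ]; ring
  have h := tprod_eq_zero_mul' (f := fun k : ℕ => 1 - a*(q:ℂ)^k) hm
  rw [qpiC, h]
  simp only [pow_zero, mul_one]
  congr 1
  rw [qpiC]
  exact tprod_congr fun k => by rw [pow_succ]; ring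

lemma qpiC_split_n (hq0 : 0 < q) (hq1 : q < 1) (a : ℂ) (n : ℕ) :
    qpiC (q:ℂ) a = qpC (q:ℂ) a n * qpiC (q:ℂ) (a * (q:ℂ)^n) := by
  induction n with
  | zero => simp [qpC]
  | succ n ih =>
      rw [ih, qpiC_split hq0 hq1 (a * (q:ℂ)^n)]
      simp only [qpC, Finset.prod_range_succ]
      rw [show a * (q:ℂ)^n * (q:ℂ) = a * (q:ℂ)^(n+1) by ring]
      ring

end Aux

section Bounds
variable {q : ℝ}

lemma norm_one_sub_ge {x : ℂ} (h : ‖x‖ ≤ q) : 1 - q ≤ ‖1 - x‖ := by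
  calc 1 - q ≤ ‖(1:ℂ)‖ - ‖x‖ := by rw [norm_one]; linarith
    _ ≤ ‖1 - x‖ := norm_sub_norm_le 1 x

lemma norm_qpC_ge (hq1 : q < 1) (q' a : ℂ) (n : ℕ) (h : ∀ k, ‖a * q'^k‖ ≤ q) :
    (1-q)^n ≤ ‖qpC q' a n‖ := by
  rw [qpC, norm_prod, show (1-q)^n = ∏ _b ∈ Finset.range n, (1-q) by
    rw [Finset.prod_const, Finset.card_range]]
  exact Finset.prod_le_prod (fun k _ => by linarith [norm_nonneg (a * q'^k), h k])
    (fun k _ => norm_one_sub_ge (h k))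

lemma qpC_ne_zero (hq1 : q < 1) (q' a : ℂ) (n : ℕ) (h : ∀ k, ‖a * q'^k‖ ≤ q) :
    qpC q' a n ≠ 0 := by
  intro h0
  have := norm_qpC_ge hq1 q' a n h
  rw [h0, norm_zero] at this
  have : (0:ℝ) < (1-q)^n := pow_pos (by linarith) n
  linarith

lemma qq_le (hq0 : 0 < q) (hq1 : q < 1) (k : ℕ) : ‖(q:ℂ) * (q:ℂ)^k‖ ≤ q := by
  rw [show (q:ℂ) * (q:ℂ)^k = ((q^(k+1) : ℝ) : ℂ) by push_cast; ring, Complex.norm_real,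
    Real.norm_eq_abs, abs_of_pos (pow_pos hq0 _)]
  calc q^(k+1) ≤ q^1 := pow_le_pow_of_le_one hq0.le hq1.le (by omega)
    _ = q := pow_one q

lemma qq2_le (hq0 : 0 < q) (hq1 : q < 1) (k : ℕ) : ‖(q:ℂ)^2 * ((q:ℂ)^2)^k‖ ≤ q := by
  rw [show (q:ℂ)^2 * ((q:ℂ)^2)^k = ((q^(2*k+2) : ℝ) : ℂ) by push_cast; ring, Complex.norm_real,
    Real.norm_eq_abs, abs_of_pos (pow_pos hq0 _)]
  calc q^(2*k+2) ≤ q^1 := pow_le_pow_of_le_one hq0.le hq1.le (by omega)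
    _ = q := pow_one q

lemma sum_geom_le (hq0 : 0 < q) (hq1 : q < 1) (n : ℕ) :
    ∑ k ∈ Finset.range n, q^k ≤ (1-q)⁻¹ := by
  have h1 : ∑ k ∈ Finset.range n, q^k ≤ ∑' k : ℕ, q^k :=
    Summable.sum_le_tsum _ (fun k _ => (pow_pos hq0 k).le) (summable_geometric_of_lt_one hq0.le hq1)
  rwa [tsum_geometric_of_lt_one hq0.le hq1] at h1

lemma norm_qpC_le (hq0 : 0 < q) (hq1 : q < 1) (a : ℂ) (n : ℕ) :
    ‖qpC (q:ℂ) a n‖ ≤ Real.exp (‖a‖ * (1-q)⁻¹) := by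
  rw [qpC, norm_prod]
  calc ∏ k ∈ Finset.range n, ‖1 - a * (q:ℂ)^k‖
      ≤ ∏ k ∈ Finset.range n, Real.exp (‖a‖ * q^k) := by
        apply Finset.prod_le_prod (fun k _ => norm_nonneg _)
        intro k _
        calc ‖1 - a * (q:ℂ)^k‖ ≤ ‖(1:ℂ)‖ + ‖a * (q:ℂ)^k‖ := norm_sub_le _ _
          _ = 1 + ‖a‖ * q^k := by rw [norm_one, norm_mul_qpow hq0]
          _ ≤ Real.exp (‖a‖ * q^k) := by
              have := Real.add_one_le_exp (‖a‖ * q^k); linarith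
    _ = Real.exp (∑ k ∈ Finset.range n, ‖a‖ * q^k) := (Real.exp_sum _ _).symm
    _ ≤ Real.exp (‖a‖ * (1-q)⁻¹) := by
        apply Real.exp_le_exp.2
        rw [← Finset.mul_sum]
        exact mul_le_mul_of_nonneg_left (sum_geom_le hq0 hq1 n) (norm_nonneg a)

lemma norm_qpiC_le (hq0 : 0 < q) (hq1 : q < 1) (a : ℂ) :
    ‖qpiC (q:ℂ) a‖ ≤ Real.exp (‖a‖ * (1-q)⁻¹) :=
  le_of_tendsto ((tendsto_qpC hq0 hq1 a).norm)
    (Eventually.of_forall fun n => norm_qpC_le hq0 hq1 a n)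

lemma norm_qpC_sub_one (hq0 : 0 < q) (hq1 : q < 1) {a : ℂ} (ha : ‖a‖ ≤ 1) (n : ℕ) :
    ‖qpC (q:ℂ) a n - 1‖ ≤ ‖a‖ * (Real.exp ((1-q)⁻¹) * (1-q)⁻¹) := by
  have hE : ∀ m : ℕ, ‖qpC (q:ℂ) a m‖ ≤ Real.exp ((1-q)⁻¹) := by
    intro m
    refine (norm_qpC_le hq0 hq1 a m).trans (Real.exp_le_exp.2 ?_)
    have : (0:ℝ) ≤ (1-q)⁻¹ := inv_nonneg.2 (by linarith)
    nlinarith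
  have key : ∀ m : ℕ, ‖qpC (q:ℂ) a m - 1‖ ≤
      ‖a‖ * Real.exp ((1-q)⁻¹) * ∑ k ∈ Finset.range m, q^k := by
    intro m
    induction m with
    | zero => simp [qpC]
    | succ m ih =>
        have hstep : qpC (q:ℂ) a (m+1) = qpC (q:ℂ) a m * (1 - a * (q:ℂ)^m) := by
          rw [qpC, qpC, Finset.prod_range_succ]
        have : qpC (q:ℂ) a (m+1) - 1
            = (qpC (q:ℂ) a m - 1) - qpC (q:ℂ) a m * (a * (q:ℂ)^m) := by
          rw [hstep]; ring
        rw [this, Finset.sum_range_succ, mul_add]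
        calc ‖(qpC (q:ℂ) a m - 1) - qpC (q:ℂ) a m * (a * (q:ℂ)^m)‖
            ≤ ‖qpC (q:ℂ) a m - 1‖ + ‖qpC (q:ℂ) a m * (a * (q:ℂ)^m)‖ := norm_sub_le _ _
          _ ≤ ‖a‖ * Real.exp ((1-q)⁻¹) * ∑ k ∈ Finset.range m, q^k
              + Real.exp ((1-q)⁻¹) * (‖a‖ * q^m) := by
              refine add_le_add ih ?_
              rw [norm_mul, norm_mul_qpow hq0]
              exact mul_le_mul_of_nonneg_right (hE m)
                (mul_nonneg (norm_nonneg a) (pow_pos hq0 m).le)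
          _ = ‖a‖ * Real.exp ((1-q)⁻¹) * ∑ k ∈ Finset.range m, q^k
              + ‖a‖ * Real.exp ((1-q)⁻¹) * q^m := by ring
  refine le_trans (key n) ?_
  rw [mul_assoc]
  refine mul_le_mul_of_nonneg_left ?_ (norm_nonneg a)
  exact mul_le_mul_of_nonneg_left (sum_geom_le hq0 hq1 n) (Real.exp_pos _).le

lemma norm_qpiC_sub_one (hq0 : 0 < q) (hq1 : q < 1) {a : ℂ} (ha : ‖a‖ ≤ 1) :
    ‖qpiC (q:ℂ) a - 1‖ ≤ ‖a‖ * (Real.exp ((1-q)⁻¹) * (1-q)⁻¹) := by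
  have ht : Tendsto (fun n => ‖qpC (q:ℂ) a n - 1‖) atTop (𝓝 ‖qpiC (q:ℂ) a - 1‖) :=
    ((tendsto_qpC hq0 hq1 a).sub tendsto_const_nhds).norm
  exact le_of_tendsto ht (Eventually.of_forall (norm_qpC_sub_one hq0 hq1 ha))

end Bounds

lemma tri_succ (n : ℕ) : (n+1)*((n+1)-1)/2 = n*(n-1)/2 + n := by
  cases n with
  | zero => rfl
  | succ m =>
    simp only [Nat.add_sub_cancel]
    have h1 : (m+1+1)*(m+1) = (m+1)*m + (m+1)*2 := by ring
    rw [h1, Nat.add_mul_div_right _ _ (by norm_num : (0:ℕ) < 2)]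

section Series
variable {q : ℝ}

lemma summable_maj (hq0 : 0 < q) (hq1 : q < 1) (c R : ℝ) (hR : 0 ≤ R) :
    Summable (fun n : ℕ => c * (R^n * q^(n*(n-1)/2))) := by
  apply Summable.mul_left
  apply summable_of_ratio_norm_eventually_le (r := 1/2) (by norm_num)
  have ht : Tendsto (fun n : ℕ => R * q ^ n) atTop (𝓝 0) := by
    simpa using (tendsto_pow_atTop_nhds_zero_of_lt_one hq0.le hq1).const_mul R
  filter_upwards [ht.eventually_le_const (by norm_num : (0:ℝ) < 1/2)] with n hn
  have hnn : (0:ℝ) ≤ R^n * q^(n*(n-1)/2) := by positivity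
  have hnn1 : (0:ℝ) ≤ R^(n+1) * q^((n+1)*((n+1)-1)/2) := by positivity
  rw [Real.norm_eq_abs, Real.norm_eq_abs, abs_of_nonneg hnn, abs_of_nonneg hnn1, tri_succ]
  have heq : R^(n+1) * q^(n*(n-1)/2 + n) = (R*q^n) * (R^n * q^(n*(n-1)/2)) := by
    rw [pow_add, pow_succ]; ring
  rw [heq]
  exact mul_le_mul_of_nonneg_right hn hnn

lemma summable_of_maj (hq0 : 0 < q) (hq1 : q < 1) (f : ℕ → ℂ) (c R : ℝ) (hR : 0 ≤ R)
    (h : ∀ n, ‖f n‖ ≤ c * (R^n * q^(n*(n-1)/2))) : Summable f :=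
  Summable.of_norm_bounded (summable_maj hq0 hq1 c R hR) h

end Series

noncomputable def gfun (q : ℝ) (w : ℂ) (n : ℕ) : ℂ :=
  (q:ℂ)^(n*(n-1)/2) * w^n * qpiC (q:ℂ) (w * (q:ℂ)^n) / qpC (q:ℂ) (q:ℂ) n

noncomputable def Gfun (q : ℝ) (w : ℂ) : ℂ := ∑' n, gfun q w n

noncomputable def tfun (q : ℝ) (w : ℂ) (k : ℕ) : ℂ :=
  ((q:ℂ)^2)^(k^2) * (w^2/(q:ℂ))^k / qpC ((q:ℂ)^2) ((q:ℂ)^2) k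

noncomputable def Bfun (q : ℝ) (w : ℂ) : ℂ := ∑' k, tfun q w k

noncomputable def ufun (q : ℝ) (w : ℂ) (n : ℕ) : ℂ :=
  (q:ℂ)^(n*(n-1)/2) * (1 - (q:ℂ)^n) * w^n * qpiC (q:ℂ) (w * (q:ℂ)^(n+1)) / qpC (q:ℂ) (q:ℂ) n

noncomputable def vfun (q : ℝ) (w : ℂ) (n : ℕ) : ℂ :=
  (q:ℂ)^(n*(n-1)/2) * (q:ℂ)^n * w^(n+1) * qpiC (q:ℂ) (w * (q:ℂ)^(n+1)) / qpC (q:ℂ) (q:ℂ) n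

section NormBounds
variable {q : ℝ}

lemma norm_Qpow (hq0 : 0 < q) (m : ℕ) : ‖(q:ℂ)^m‖ = q^m := by
  rw [norm_pow, Complex.norm_real, Real.norm_eq_abs, abs_of_pos hq0]

lemma norm_div_qpC_le (hq1 : q < 1) (q' a : ℂ) (h : ∀ k, ‖a * q'^k‖ ≤ q) (x : ℂ) (n : ℕ) :
    ‖x / qpC q' a n‖ ≤ ‖x‖ * ((1-q)⁻¹)^n := by
  have hq1' : (0:ℝ) < 1 - q := by
    have h0 := h 0
    have := norm_nonneg (a * q'^0)
    linarith
  have hP : (1-q)^n ≤ ‖qpC q' a n‖ := norm_qpC_ge hq1 q' a n h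
  have hPpos : (0:ℝ) < (1-q)^n := pow_pos hq1' n
  rw [norm_div]
  calc ‖x‖ / ‖qpC q' a n‖ ≤ ‖x‖ / (1-q)^n := by gcongr
    _ = ‖x‖ * ((1-q)⁻¹)^n := by rw [div_eq_mul_inv, inv_pow]

end NormBounds

section NormBounds2
variable {q : ℝ}

lemma norm_wQn (hq0 : 0 < q) (hq1 : q < 1) (w : ℂ) (m : ℕ) : ‖w * (q:ℂ)^m‖ ≤ ‖w‖ := by
  rw [norm_mul, norm_Qpow hq0]
  calc ‖w‖ * q^m ≤ ‖w‖ * 1 := by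
        refine mul_le_mul_of_nonneg_left ?_ (norm_nonneg w)
        exact pow_le_one₀ hq0.le hq1.le
    _ = ‖w‖ := mul_one _

lemma norm_piw_le (hq0 : 0 < q) (hq1 : q < 1) (w : ℂ) (m : ℕ) :
    ‖qpiC (q:ℂ) (w * (q:ℂ)^m)‖ ≤ Real.exp (‖w‖ * (1-q)⁻¹) := by
  refine (norm_qpiC_le hq0 hq1 _).trans (Real.exp_le_exp.2 ?_)
  exact mul_le_mul_of_nonneg_right (norm_wQn hq0 hq1 w m) (inv_nonneg.2 (by linarith))

lemma norm_gfun_le (hq0 : 0 < q) (hq1 : q < 1) (w : ℂ) (n : ℕ) :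
    ‖gfun q w n‖ ≤ Real.exp (‖w‖ * (1-q)⁻¹) * ((‖w‖ * (1-q)⁻¹)^n * q^(n*(n-1)/2)) := by
  rw [gfun]
  refine (norm_div_qpC_le hq1 _ _ (qq_le hq0 hq1) _ n).trans ?_
  rw [norm_mul, norm_mul, norm_Qpow hq0, norm_pow]
  calc q^(n*(n-1)/2) * ‖w‖^n * ‖qpiC (q:ℂ) (w * (q:ℂ)^n)‖ * ((1-q)⁻¹)^n
      ≤ q^(n*(n-1)/2) * ‖w‖^n * Real.exp (‖w‖ * (1-q)⁻¹) * ((1-q)⁻¹)^n := by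
        have h1 : (0:ℝ) ≤ q^(n*(n-1)/2) * ‖w‖^n := by positivity
        have h2 : (0:ℝ) ≤ ((1-q)⁻¹)^n := by
          apply pow_nonneg (inv_nonneg.2 (by linarith))
        exact mul_le_mul_of_nonneg_right
          (mul_le_mul_of_nonneg_left (norm_piw_le hq0 hq1 w n) h1) h2
    _ = Real.exp (‖w‖ * (1-q)⁻¹) * ((‖w‖ * (1-q)⁻¹)^n * q^(n*(n-1)/2)) := by
        rw [mul_pow]; ring

lemma norm_ufun_le (hq0 : 0 < q) (hq1 : q < 1) (w : ℂ) (n : ℕ) :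
    ‖ufun q w n‖ ≤ (2 * Real.exp (‖w‖ * (1-q)⁻¹)) * ((‖w‖ * (1-q)⁻¹)^n * q^(n*(n-1)/2)) := by
  rw [ufun]
  refine (norm_div_qpC_le hq1 _ _ (qq_le hq0 hq1) _ n).trans ?_
  rw [norm_mul, norm_mul, norm_mul, norm_Qpow hq0, norm_pow]
  have h2 : ‖(1:ℂ) - (q:ℂ)^n‖ ≤ 2 := by
    calc ‖(1:ℂ) - (q:ℂ)^n‖ ≤ ‖(1:ℂ)‖ + ‖(q:ℂ)^n‖ := norm_sub_le _ _
      _ = 1 + q^n := by rw [norm_one, norm_Qpow hq0]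
      _ ≤ 2 := by have := pow_le_one₀ hq0.le hq1.le (n:=n); linarith
  have h3 := norm_piw_le hq0 hq1 w (n+1)
  have hw : (0:ℝ) ≤ ‖w‖^n := by positivity
  have hqn : (0:ℝ) ≤ q^(n*(n-1)/2) := by positivity
  have hinv : (0:ℝ) ≤ ((1-q)⁻¹)^n := pow_nonneg (inv_nonneg.2 (by linarith)) n
  have hE : (0:ℝ) ≤ Real.exp (‖w‖ * (1-q)⁻¹) := (Real.exp_pos _).le
  calc q^(n*(n-1)/2) * ‖(1:ℂ) - (q:ℂ)^n‖ * ‖w‖^n * ‖qpiC (q:ℂ) (w * (q:ℂ)^(n+1))‖ * ((1-q)⁻¹)^n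
      ≤ q^(n*(n-1)/2) * 2 * ‖w‖^n * Real.exp (‖w‖ * (1-q)⁻¹) * ((1-q)⁻¹)^n := by
        refine mul_le_mul_of_nonneg_right ?_ hinv
        refine mul_le_mul ?_ h3 (norm_nonneg _) (by positivity)
        exact mul_le_mul_of_nonneg_right (mul_le_mul_of_nonneg_left h2 hqn) hw
    _ = (2 * Real.exp (‖w‖ * (1-q)⁻¹)) * ((‖w‖ * (1-q)⁻¹)^n * q^(n*(n-1)/2)) := by
        rw [mul_pow]; ring

lemma norm_vfun_le (hq0 : 0 < q) (hq1 : q < 1) (w : ℂ) (n : ℕ) :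
    ‖vfun q w n‖ ≤ (‖w‖ * Real.exp (‖w‖ * (1-q)⁻¹)) * ((‖w‖ * (1-q)⁻¹)^n * q^(n*(n-1)/2)) := by
  rw [vfun]
  refine (norm_div_qpC_le hq1 _ _ (qq_le hq0 hq1) _ n).trans ?_
  rw [norm_mul, norm_mul, norm_mul, norm_Qpow hq0, norm_Qpow hq0, norm_pow]
  have h2 : q^n ≤ 1 := pow_le_one₀ hq0.le hq1.le
  have h3 := norm_piw_le hq0 hq1 w (n+1)
  have hinv : (0:ℝ) ≤ ((1-q)⁻¹)^n := pow_nonneg (inv_nonneg.2 (by linarith)) n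
  calc q^(n*(n-1)/2) * q^n * ‖w‖^(n+1) * ‖qpiC (q:ℂ) (w * (q:ℂ)^(n+1))‖ * ((1-q)⁻¹)^n
      ≤ q^(n*(n-1)/2) * 1 * ‖w‖^(n+1) * Real.exp (‖w‖ * (1-q)⁻¹) * ((1-q)⁻¹)^n := by
        refine mul_le_mul_of_nonneg_right ?_ hinv
        refine mul_le_mul ?_ h3 (norm_nonneg _) (by positivity)
        refine mul_le_mul_of_nonneg_right ?_ (by positivity)
        exact mul_le_mul_of_nonneg_left h2 (by positivity)
    _ = (‖w‖ * Real.exp (‖w‖ * (1-q)⁻¹)) * ((‖w‖ * (1-q)⁻¹)^n * q^(n*(n-1)/2)) := by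
        rw [mul_pow, pow_succ]; ring

lemma norm_tfun_le (hq0 : 0 < q) (hq1 : q < 1) (w : ℂ) (k : ℕ) :
    ‖tfun q w k‖ ≤ 1 * ((‖w‖^2 * (1-q)⁻¹)^k * q^(k*(k-1)/2)) := by
  rw [tfun]
  refine (norm_div_qpC_le hq1 _ _ (qq2_le hq0 hq1) _ k).trans ?_
  simp only [norm_mul, norm_pow, norm_div, Complex.norm_real, Real.norm_eq_abs,
    abs_of_pos hq0]
  have key : (q^2)^(k^2) ≤ q^(k*(k-1)/2) * q^k := by
    rw [← pow_mul, ← pow_add]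
    apply pow_le_pow_of_le_one hq0.le hq1.le
    have h1 : k*(k-1)/2 ≤ k*k := le_trans (Nat.div_le_self _ _) (Nat.mul_le_mul_left k (by omega))
    have h2 : k^2 = k*k := sq k
    nlinarith [h1, h2]
  calc (q^2)^(k^2) * (‖w‖^2/q)^k * ((1-q)⁻¹)^k
      ≤ (q^(k*(k-1)/2) * q^k) * (‖w‖^2/q)^k * ((1-q)⁻¹)^k := by
        refine mul_le_mul_of_nonneg_right (mul_le_mul_of_nonneg_right key ?_) ?_
        · positivity
        · exact pow_nonneg (inv_nonneg.2 (by linarith)) k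
    _ = 1 * ((‖w‖^2 * (1-q)⁻¹)^k * q^(k*(k-1)/2)) := by
        have hc : q^k * q⁻¹^k = 1 := by rw [← mul_pow, mul_inv_cancel₀ hq0.ne', one_pow]
        linear_combination (q^(k*(k-1)/2) * (‖w‖^2)^k * (1-q)⁻¹^k) * hc

lemma summable_gfun (hq0 : 0 < q) (hq1 : q < 1) (w : ℂ) : Summable (gfun q w) :=
  summable_of_maj hq0 hq1 _ _ _ (mul_nonneg (norm_nonneg w) (inv_nonneg.2 (by linarith)))
    (norm_gfun_le hq0 hq1 w)

lemma summable_ufun (hq0 : 0 < q) (hq1 : q < 1) (w : ℂ) : Summable (ufun q w) :=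
  summable_of_maj hq0 hq1 _ _ _ (mul_nonneg (norm_nonneg w) (inv_nonneg.2 (by linarith)))
    (norm_ufun_le hq0 hq1 w)

lemma summable_vfun (hq0 : 0 < q) (hq1 : q < 1) (w : ℂ) : Summable (vfun q w) :=
  summable_of_maj hq0 hq1 _ _ _ (mul_nonneg (norm_nonneg w) (inv_nonneg.2 (by linarith)))
    (norm_vfun_le hq0 hq1 w)

lemma summable_tfun (hq0 : 0 < q) (hq1 : q < 1) (w : ℂ) : Summable (tfun q w) :=
  summable_of_maj hq0 hq1 _ _ _ (mul_nonneg (by positivity) (inv_nonneg.2 (by linarith)))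
    (norm_tfun_le hq0 hq1 w)

end NormBounds2

section FuncEq
variable {q : ℝ}

lemma Qne (hq0 : 0 < q) : (q:ℂ) ≠ 0 := Complex.ofReal_ne_zero.2 hq0.ne'

lemma one_sub_Qpow_ne (hq0 : 0 < q) (hq1 : q < 1) {m : ℕ} (hm : 1 ≤ m) :
    (1:ℂ) - (q:ℂ)^m ≠ 0 := by
  intro h
  have hb : ‖(q:ℂ)^m‖ ≤ q := by
    rw [norm_Qpow hq0]
    calc q^m ≤ q^1 := pow_le_pow_of_le_one hq0.le hq1.le hm
      _ = q := pow_one q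
  have := norm_one_sub_ge hb
  rw [h, norm_zero] at this
  linarith

lemma qpC_qq_ne (hq0 : 0 < q) (hq1 : q < 1) (n : ℕ) : qpC (q:ℂ) (q:ℂ) n ≠ 0 :=
  qpC_ne_zero hq1 _ _ n (qq_le hq0 hq1)

lemma qpC_q2_ne (hq0 : 0 < q) (hq1 : q < 1) (n : ℕ) : qpC ((q:ℂ)^2) ((q:ℂ)^2) n ≠ 0 :=
  qpC_ne_zero hq1 _ _ n (qq2_le hq0 hq1)

lemma qpC_qq_succ (n : ℕ) : qpC (q:ℂ) (q:ℂ) (n+1) = qpC (q:ℂ) (q:ℂ) n * (1 - (q:ℂ)^(n+1)) := by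
  rw [qpC, Finset.prod_range_succ, ← qpC, pow_succ']

lemma qpC_q2_succ (n : ℕ) : qpC ((q:ℂ)^2) ((q:ℂ)^2) (n+1)
    = qpC ((q:ℂ)^2) ((q:ℂ)^2) n * (1 - (q:ℂ)^(2*n+2)) := by
  rw [qpC, Finset.prod_range_succ, ← qpC,
    show (q:ℂ)^2 * ((q:ℂ)^2)^n = (q:ℂ)^(2*n+2) by rw [← pow_mul, ← pow_add]; ring_nf]

lemma gfun_diff (hq0 : 0 < q) (hq1 : q < 1) (w : ℂ) (n : ℕ) :
    gfun q w n - gfun q ((q:ℂ)*w) n = ufun q w n - vfun q w n := by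
  have hsplit : qpiC (q:ℂ) (w*(q:ℂ)^n) = (1 - w*(q:ℂ)^n) * qpiC (q:ℂ) (w*(q:ℂ)^(n+1)) := by
    have h := qpiC_split hq0 hq1 (w*(q:ℂ)^n)
    rwa [show w*(q:ℂ)^n*(q:ℂ) = w*(q:ℂ)^(n+1) by ring] at h
  simp only [gfun, ufun, vfun]
  rw [show (q:ℂ)*w*(q:ℂ)^n = w*(q:ℂ)^(n+1) by ring, hsplit, div_sub_div_same,
    div_sub_div_same]
  congr 1
  ring

lemma ufun_zero (w : ℂ) : ufun q w 0 = 0 := by simp [ufun]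

lemma ufun_succ (hq0 : 0 < q) (hq1 : q < 1) (w : ℂ) (n : ℕ) :
    ufun q w (n+1) = vfun q w n + ((q:ℂ)*w^2) * gfun q ((q:ℂ)^2*w) n := by
  have hsplit : qpiC (q:ℂ) (w*(q:ℂ)^(n+1))
      = (1 - w*(q:ℂ)^(n+1)) * qpiC (q:ℂ) (w*(q:ℂ)^(n+2)) := by
    have h := qpiC_split hq0 hq1 (w*(q:ℂ)^(n+1))
    rwa [show w*(q:ℂ)^(n+1)*(q:ℂ) = w*(q:ℂ)^(n+2) by ring] at h
  have hP := qpC_qq_ne hq0 hq1 n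
  have h1 : (1:ℂ) - (q:ℂ)^(n+1) ≠ 0 := one_sub_Qpow_ne hq0 hq1 (by omega)
  simp only [ufun, vfun, gfun]
  rw [tri_succ, qpC_qq_succ, show (q:ℂ)^2*w*(q:ℂ)^n = w*(q:ℂ)^(n+2) by ring, hsplit]
  field_simp
  ring

lemma Gfun_feq (hq0 : 0 < q) (hq1 : q < 1) (w : ℂ) :
    Gfun q w = Gfun q ((q:ℂ)*w) + (q:ℂ)*w^2 * Gfun q ((q:ℂ)^2*w) := by
  have hg := summable_gfun hq0 hq1 w
  have hg1 := summable_gfun hq0 hq1 ((q:ℂ)*w)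
  have hg2 := summable_gfun hq0 hq1 ((q:ℂ)^2*w)
  have hu := summable_ufun hq0 hq1 w
  have hv := summable_vfun hq0 hq1 w
  have hgm : Summable (fun n => ((q:ℂ)*w^2) * gfun q ((q:ℂ)^2*w) n) := hg2.mul_left _
  have step1 : Gfun q w - Gfun q ((q:ℂ)*w) = (∑' n, ufun q w n) - ∑' n, vfun q w n := by
    rw [Gfun, Gfun, ← Summable.tsum_sub hg hg1, ← Summable.tsum_sub hu hv]
    exact tsum_congr (gfun_diff hq0 hq1 w)
  have step2 : (∑' n, ufun q w n) = (∑' n, vfun q w n) + (q:ℂ)*w^2 * Gfun q ((q:ℂ)^2*w) := by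
    rw [Summable.tsum_eq_zero_add hu, ufun_zero, zero_add]
    calc (∑' n, ufun q w (n+1))
        = ∑' n, (vfun q w n + ((q:ℂ)*w^2) * gfun q ((q:ℂ)^2*w) n) :=
          tsum_congr (ufun_succ hq0 hq1 w)
      _ = (∑' n, vfun q w n) + ∑' n, ((q:ℂ)*w^2) * gfun q ((q:ℂ)^2*w) n := Summable.tsum_add hv hgm
      _ = (∑' n, vfun q w n) + (q:ℂ)*w^2 * Gfun q ((q:ℂ)^2*w) := by rw [tsum_mul_left, Gfun]
  rw [step2] at step1
  linear_combination step1

lemma tfun_zero_diff (hq0 : 0 < q) (w : ℂ) : tfun q w 0 - tfun q ((q:ℂ)*w) 0 = 0 := by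
  simp [tfun]

lemma tfun_succ_diff (hq0 : 0 < q) (hq1 : q < 1) (w : ℂ) (k : ℕ) :
    tfun q w (k+1) - tfun q ((q:ℂ)*w) (k+1) = ((q:ℂ)*w^2) * tfun q ((q:ℂ)^2*w) k := by
  have hP := qpC_q2_ne hq0 hq1 k
  have h1 : (1:ℂ) - (q:ℂ)^(2*k+2) ≠ 0 := one_sub_Qpow_ne hq0 hq1 (by omega)
  have hQ := Qne hq0
  simp only [tfun, div_pow]
  rw [qpC_q2_succ]
  field_simp
  ring

lemma Bfun_feq (hq0 : 0 < q) (hq1 : q < 1) (w : ℂ) :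
    Bfun q w = Bfun q ((q:ℂ)*w) + (q:ℂ)*w^2 * Bfun q ((q:ℂ)^2*w) := by
  have ht := summable_tfun hq0 hq1 w
  have ht1 := summable_tfun hq0 hq1 ((q:ℂ)*w)
  have ht2 := summable_tfun hq0 hq1 ((q:ℂ)^2*w)
  have hd : Summable (fun k => tfun q w k - tfun q ((q:ℂ)*w) k) := ht.sub ht1
  have step1 : Bfun q w - Bfun q ((q:ℂ)*w) = ∑' k, (tfun q w k - tfun q ((q:ℂ)*w) k) := by
    rw [Bfun, Bfun, ← Summable.tsum_sub ht ht1]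
  have step2 : (∑' k, (tfun q w k - tfun q ((q:ℂ)*w) k)) = (q:ℂ)*w^2 * Bfun q ((q:ℂ)^2*w) := by
    rw [Summable.tsum_eq_zero_add hd, tfun_zero_diff hq0, zero_add]
    calc (∑' k, (tfun q w (k+1) - tfun q ((q:ℂ)*w) (k+1)))
        = ∑' k, ((q:ℂ)*w^2) * tfun q ((q:ℂ)^2*w) k := tsum_congr (tfun_succ_diff hq0 hq1 w)
      _ = (q:ℂ)*w^2 * Bfun q ((q:ℂ)^2*w) := by rw [tsum_mul_left, Bfun]
  rw [step2] at step1
  linear_combination step1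

end FuncEq

section Small
variable {q : ℝ}

noncomputable def smallK (q : ℝ) (n : ℕ) : ℝ :=
  Real.exp ((1-q)⁻¹) * ((1-q)⁻¹)^(n+1) * q^(n*(n-1)/2)

noncomputable def smallK2 (q : ℝ) (k : ℕ) : ℝ := ((1-q)⁻¹)^(k+1) * q^(k*(k-1)/2)

lemma summable_smallK (hq0 : 0 < q) (hq1 : q < 1) : Summable (smallK q) := by
  have h := summable_maj hq0 hq1 (Real.exp ((1-q)⁻¹) * (1-q)⁻¹) ((1-q)⁻¹)
    (inv_nonneg.2 (by linarith))
  exact h.congr fun n => by rw [smallK, pow_succ]; ring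

lemma summable_smallK2 (hq0 : 0 < q) (hq1 : q < 1) : Summable (smallK2 q) := by
  have h := summable_maj hq0 hq1 ((1-q)⁻¹) ((1-q)⁻¹) (inv_nonneg.2 (by linarith))
  exact h.congr fun n => by rw [smallK2, pow_succ]; ring

lemma smallK_nonneg (hq0 : 0 < q) (hq1 : q < 1) (n : ℕ) : 0 ≤ smallK q n := by
  rw [smallK]
  have : (0:ℝ) ≤ (1-q)⁻¹ := inv_nonneg.2 (by linarith)
  positivity

lemma smallK2_nonneg (hq0 : 0 < q) (hq1 : q < 1) (k : ℕ) : 0 ≤ smallK2 q k := by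
  rw [smallK2]
  have : (0:ℝ) ≤ (1-q)⁻¹ := inv_nonneg.2 (by linarith)
  positivity

lemma norm_gfun_tail (hq0 : 0 < q) (hq1 : q < 1) {w : ℂ} (hw : ‖w‖ ≤ 1) (n : ℕ) :
    ‖gfun q w (n+1)‖ ≤ ‖w‖ * smallK q n := by
  have hinv : (0:ℝ) ≤ (1-q)⁻¹ := inv_nonneg.2 (by linarith)
  have h1 : (‖w‖*(1-q)⁻¹)^(n+1) ≤ ‖w‖ * ((1-q)⁻¹)^(n+1) := by
    rw [mul_pow]
    exact mul_le_mul_of_nonneg_right (pow_le_of_le_one (norm_nonneg w) hw (by omega))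
      (pow_nonneg hinv _)
  have h2 : q^((n+1)*((n+1)-1)/2) ≤ q^(n*(n-1)/2) := by
    rw [tri_succ]
    exact pow_le_pow_of_le_one hq0.le hq1.le (Nat.le_add_right _ _)
  have h3 : Real.exp (‖w‖ * (1-q)⁻¹) ≤ Real.exp ((1-q)⁻¹) :=
    Real.exp_le_exp.2 (mul_le_of_le_one_left hinv hw)
  refine (norm_gfun_le hq0 hq1 w (n+1)).trans ?_
  calc Real.exp (‖w‖*(1-q)⁻¹) * ((‖w‖*(1-q)⁻¹)^(n+1) * q^((n+1)*((n+1)-1)/2))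
      ≤ Real.exp ((1-q)⁻¹) * ((‖w‖ * ((1-q)⁻¹)^(n+1)) * q^(n*(n-1)/2)) := by
        refine mul_le_mul h3 ?_ (by positivity) (Real.exp_pos _).le
        exact mul_le_mul h1 h2 (by positivity) (by positivity)
    _ = ‖w‖ * smallK q n := by rw [smallK]; ring

lemma norm_tfun_tail (hq0 : 0 < q) (hq1 : q < 1) {w : ℂ} (hw : ‖w‖ ≤ 1) (k : ℕ) :
    ‖tfun q w (k+1)‖ ≤ ‖w‖ * smallK2 q k := by
  have hinv : (0:ℝ) ≤ (1-q)⁻¹ := inv_nonneg.2 (by linarith)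
  have h1 : (‖w‖^2*(1-q)⁻¹)^(k+1) ≤ ‖w‖ * ((1-q)⁻¹)^(k+1) := by
    rw [mul_pow]
    refine mul_le_mul_of_nonneg_right ?_ (pow_nonneg hinv _)
    rw [← pow_mul]
    exact pow_le_of_le_one (norm_nonneg w) hw (by omega)
  have h2 : q^((k+1)*((k+1)-1)/2) ≤ q^(k*(k-1)/2) := by
    rw [tri_succ]
    exact pow_le_pow_of_le_one hq0.le hq1.le (Nat.le_add_right _ _)
  refine (norm_tfun_le hq0 hq1 w (k+1)).trans ?_
  rw [one_mul]
  calc (‖w‖^2*(1-q)⁻¹)^(k+1) * q^((k+1)*((k+1)-1)/2)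
      ≤ (‖w‖ * ((1-q)⁻¹)^(k+1)) * q^(k*(k-1)/2) :=
        mul_le_mul h1 h2 (by positivity) (by positivity)
    _ = ‖w‖ * smallK2 q k := by rw [smallK2]; ring

lemma qpiC_zero_arg : qpiC (q:ℂ) 0 = 1 := by
  rw [qpiC]
  have h : (fun k : ℕ => 1 - (0:ℂ)*(q:ℂ)^k) = fun _ => (1:ℂ) := funext fun k => by ring_nf
  rw [h, tprod_one]

lemma Gfun_zero (hq0 : 0 < q) (hq1 : q < 1) : Gfun q 0 = 1 := by
  rw [Gfun, Summable.tsum_eq_zero_add (summable_gfun hq0 hq1 0)]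
  have h0 : gfun q 0 0 = 1 := by
    simp [gfun, qpC, qpiC_zero_arg]
  have ht : ∀ n : ℕ, gfun q 0 (n+1) = 0 := fun n => by
    simp [gfun, zero_pow (Nat.succ_ne_zero n)]
  rw [h0]
  simp [ht]

lemma Bfun_zero (hq0 : 0 < q) (hq1 : q < 1) : Bfun q 0 = 1 := by
  rw [Bfun, Summable.tsum_eq_zero_add (summable_tfun hq0 hq1 0)]
  have h0 : tfun q 0 0 = 1 := by simp [tfun, qpC]
  have ht : ∀ k : ℕ, tfun q 0 (k+1) = 0 := fun k => by
    simp [tfun, zero_pow (Nat.succ_ne_zero k)]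
  rw [h0]
  simp [ht]

noncomputable def smallC (q : ℝ) : ℝ :=
  Real.exp ((1-q)⁻¹) * (1-q)⁻¹ + (∑' n, smallK q n) + ∑' k, smallK2 q k

lemma smallC_nonneg (hq0 : 0 < q) (hq1 : q < 1) : 0 ≤ smallC q := by
  have h1 : (0:ℝ) ≤ (1-q)⁻¹ := inv_nonneg.2 (by linarith)
  have h2 : (0:ℝ) ≤ ∑' n, smallK q n := tsum_nonneg (smallK_nonneg hq0 hq1)
  have h3 : (0:ℝ) ≤ ∑' k, smallK2 q k := tsum_nonneg (smallK2_nonneg hq0 hq1)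
  have h4 : (0:ℝ) ≤ Real.exp ((1-q)⁻¹) := (Real.exp_pos _).le
  rw [smallC]
  positivity

lemma small_G (hq0 : 0 < q) (hq1 : q < 1) {w : ℂ} (hw : ‖w‖ ≤ 1) :
    ‖Gfun q w - 1‖ ≤ (Real.exp ((1-q)⁻¹) * (1-q)⁻¹ + ∑' n, smallK q n) * ‖w‖ := by
  rw [Gfun, Summable.tsum_eq_zero_add (summable_gfun hq0 hq1 w)]
  have hg0 : gfun q w 0 = qpiC (q:ℂ) w := by
    simp [gfun, qpC]
  rw [hg0]
  have hb := norm_gfun_tail hq0 hq1 hw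
  have hKs : Summable (fun n => ‖w‖ * smallK q n) := (summable_smallK hq0 hq1).mul_left _
  have hsn : Summable (fun n => ‖gfun q w (n+1)‖) :=
    Summable.of_nonneg_of_le (fun n => norm_nonneg _) hb hKs
  calc ‖qpiC (q:ℂ) w + (∑' n, gfun q w (n+1)) - 1‖
      ≤ ‖qpiC (q:ℂ) w - 1‖ + ‖∑' n, gfun q w (n+1)‖ := by
        rw [show qpiC (q:ℂ) w + (∑' n, gfun q w (n+1)) - 1
          = (qpiC (q:ℂ) w - 1) + ∑' n, gfun q w (n+1) by ring]
        exact norm_add_le _ _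
    _ ≤ ‖w‖ * (Real.exp ((1-q)⁻¹) * (1-q)⁻¹) + ∑' n, ‖gfun q w (n+1)‖ :=
        add_le_add (norm_qpiC_sub_one hq0 hq1 hw) (norm_tsum_le_tsum_norm hsn)
    _ ≤ ‖w‖ * (Real.exp ((1-q)⁻¹) * (1-q)⁻¹) + ∑' n, ‖w‖ * smallK q n :=
        add_le_add_right (Summable.tsum_le_tsum hb hsn hKs) _
    _ = (Real.exp ((1-q)⁻¹) * (1-q)⁻¹ + ∑' n, smallK q n) * ‖w‖ := by
        rw [tsum_mul_left]; ring

lemma small_B (hq0 : 0 < q) (hq1 : q < 1) {w : ℂ} (hw : ‖w‖ ≤ 1) :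
    ‖Bfun q w - 1‖ ≤ (∑' k, smallK2 q k) * ‖w‖ := by
  rw [Bfun, Summable.tsum_eq_zero_add (summable_tfun hq0 hq1 w)]
  have h0 : tfun q w 0 = 1 := by simp [tfun, qpC]
  rw [h0]
  have hb := norm_tfun_tail hq0 hq1 hw
  have hKs : Summable (fun k => ‖w‖ * smallK2 q k) := (summable_smallK2 hq0 hq1).mul_left _
  have hsn : Summable (fun k => ‖tfun q w (k+1)‖) :=
    Summable.of_nonneg_of_le (fun k => norm_nonneg _) hb hKs
  calc ‖1 + (∑' k, tfun q w (k+1)) - 1‖ = ‖∑' k, tfun q w (k+1)‖ := by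
        rw [show (1:ℂ) + (∑' k, tfun q w (k+1)) - 1 = ∑' k, tfun q w (k+1) by ring]
    _ ≤ ∑' k, ‖tfun q w (k+1)‖ := norm_tsum_le_tsum_norm hsn
    _ ≤ ∑' k, ‖w‖ * smallK2 q k := Summable.tsum_le_tsum hb hsn hKs
    _ = (∑' k, smallK2 q k) * ‖w‖ := by rw [tsum_mul_left]; ring

lemma small_D (hq0 : 0 < q) (hq1 : q < 1) {w : ℂ} (hw : ‖w‖ ≤ 1) :
    ‖Gfun q w - Bfun q w‖ ≤ smallC q * ‖w‖ := by
  calc ‖Gfun q w - Bfun q w‖ = ‖(Gfun q w - 1) - (Bfun q w - 1)‖ := by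
        rw [show Gfun q w - Bfun q w = (Gfun q w - 1) - (Bfun q w - 1) by ring]
    _ ≤ ‖Gfun q w - 1‖ + ‖Bfun q w - 1‖ := norm_sub_le _ _
    _ ≤ (Real.exp ((1-q)⁻¹) * (1-q)⁻¹ + ∑' n, smallK q n) * ‖w‖
        + (∑' k, smallK2 q k) * ‖w‖ := add_le_add (small_G hq0 hq1 hw) (small_B hq0 hq1 hw)
    _ = smallC q * ‖w‖ := by rw [smallC]; ring

end Small

section Vanish
variable {q : ℝ}

lemma prodbound (hq0 : 0 < q) (hq1 : q < 1) (R : ℝ) (N : ℕ) :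
    ∏ i ∈ Finset.range N, (1 + q^(2*(N-i)-1)*R^2) ≤ Real.exp (R^2*(1-q)⁻¹) := by
  calc ∏ i ∈ Finset.range N, (1 + q^(2*(N-i)-1)*R^2)
      ≤ ∏ i ∈ Finset.range N, Real.exp (q^(2*(N-i)-1)*R^2) := by
        apply Finset.prod_le_prod
        · intro i _
          have : (0:ℝ) ≤ q^(2*(N-i)-1)*R^2 := by positivity
          linarith
        · intro i _
          have := Real.add_one_le_exp (q^(2*(N-i)-1)*R^2)
          linarith
    _ = Real.exp (∑ i ∈ Finset.range N, q^(2*(N-i)-1)*R^2) := (Real.exp_sum _ _).symm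
    _ ≤ Real.exp (R^2*(1-q)⁻¹) := by
        apply Real.exp_le_exp.2
        calc ∑ i ∈ Finset.range N, q^(2*(N-i)-1)*R^2
            ≤ ∑ i ∈ Finset.range N, q^(N-1-i)*R^2 := by
              apply Finset.sum_le_sum
              intro i hi
              have hi' : i < N := Finset.mem_range.1 hi
              refine mul_le_mul_of_nonneg_right ?_ (sq_nonneg R)
              exact pow_le_pow_of_le_one hq0.le hq1.le (by omega)
          _ = (∑ i ∈ Finset.range N, q^i) * R^2 := by
              rw [← Finset.sum_mul]
              congr 1
              exact Finset.sum_range_reflect (fun i => q^i) N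
          _ ≤ (1-q)⁻¹ * R^2 := by
              exact mul_le_mul_of_nonneg_right (sum_geom_le hq0 hq1 N) (sq_nonneg R)
          _ = R^2*(1-q)⁻¹ := by ring

lemma vanish (hq0 : 0 < q) (hq1 : q < 1) (D : ℂ → ℂ)
    (hfe : ∀ w, D w = D ((q:ℂ)*w) + (q:ℂ)*w^2 * D ((q:ℂ)^2*w))
    (c : ℝ) (hc : 0 ≤ c) (hsmall : ∀ w : ℂ, ‖w‖ ≤ 1 → ‖D w‖ ≤ c*‖w‖) (z : ℂ) : D z = 0 := by
  set R := ‖z‖ with hR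
  have hR0 : 0 ≤ R := norm_nonneg z
  have main : ∀ N : ℕ, q^N * R ≤ 1 → ∀ m : ℕ, m ≤ N → ∀ w : ℂ, ‖w‖ ≤ q^(N-m)*R →
      ‖D w‖ ≤ c * q^N * R * ∏ i ∈ Finset.range m, (1 + q^(2*(N-i)-1)*R^2) := by
    intro N hN m
    induction m with
    | zero =>
        intro _ w hw
        rw [Nat.sub_zero] at hw
        simp only [Finset.range_zero, Finset.prod_empty, mul_one]
        calc ‖D w‖ ≤ c*‖w‖ := hsmall w (hw.trans hN)
          _ ≤ c * (q^N * R) := mul_le_mul_of_nonneg_left hw hc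
          _ = c * q^N * R := by ring
    | succ m ih =>
        intro hm w hw
        have hm' : m ≤ N := by omega
        have hqN : (0:ℝ) < q^(N-m) := pow_pos hq0 _
        have hsub : N - (m+1) + 1 = N - m := by omega
        have h1 : ‖(q:ℂ)*w‖ ≤ q^(N-m)*R := by
          rw [norm_mul, Complex.norm_real, Real.norm_eq_abs, abs_of_pos hq0]
          calc q * ‖w‖ ≤ q * (q^(N-(m+1))*R) := by
                exact mul_le_mul_of_nonneg_left hw hq0.le
            _ = q^(N-m)*R := by rw [← hsub, pow_succ]; ring
        have h2 : ‖(q:ℂ)^2*w‖ ≤ q^(N-m)*R := by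
          rw [norm_mul, norm_Qpow hq0]
          calc q^2 * ‖w‖ ≤ q^2 * (q^(N-(m+1))*R) := by
                exact mul_le_mul_of_nonneg_left hw (by positivity)
            _ = q * (q^(N-m)*R) := by rw [← hsub, pow_succ]; ring
            _ ≤ 1 * (q^(N-m)*R) := by
                refine mul_le_mul_of_nonneg_right hq1.le (by positivity)
            _ = q^(N-m)*R := one_mul _
        have e1 := ih hm' ((q:ℂ)*w) h1
        have e2 := ih hm' ((q:ℂ)^2*w) h2
        have hq2 : q*‖w‖^2 ≤ q^(2*(N-(m+1))+1)*R^2 := by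
          calc q*‖w‖^2 ≤ q*(q^(N-(m+1))*R)^2 := by
                refine mul_le_mul_of_nonneg_left ?_ hq0.le
                exact pow_le_pow_left₀ (norm_nonneg w) hw 2
            _ = q^(2*(N-(m+1))+1)*R^2 := by
                rw [mul_pow, ← pow_mul, pow_add, pow_one]; ring
        have hexp : 2*(N-(m+1))+1 = 2*(N-m)-1 := by omega
        have hprod_nonneg : (0:ℝ) ≤ ∏ i ∈ Finset.range m, (1 + q^(2*(N-i)-1)*R^2) := by
          apply Finset.prod_nonneg
          intro i _
          have : (0:ℝ) ≤ q^(2*(N-i)-1)*R^2 := by positivity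
          linarith
        have hcqR : (0:ℝ) ≤ c * q^N * R := by positivity
        rw [hfe w]
        calc ‖D ((q:ℂ)*w) + (q:ℂ)*w^2 * D ((q:ℂ)^2*w)‖
            ≤ ‖D ((q:ℂ)*w)‖ + ‖(q:ℂ)*w^2 * D ((q:ℂ)^2*w)‖ := norm_add_le _ _
          _ = ‖D ((q:ℂ)*w)‖ + q*‖w‖^2 * ‖D ((q:ℂ)^2*w)‖ := by
              rw [norm_mul, norm_mul, norm_pow, Complex.norm_real, Real.norm_eq_abs,
                abs_of_pos hq0]
          _ ≤ (c * q^N * R * ∏ i ∈ Finset.range m, (1 + q^(2*(N-i)-1)*R^2))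
              + q^(2*(N-(m+1))+1)*R^2 *
                (c * q^N * R * ∏ i ∈ Finset.range m, (1 + q^(2*(N-i)-1)*R^2)) := by
              refine add_le_add e1 ?_
              refine mul_le_mul hq2 e2 (norm_nonneg _) (by positivity)
          _ = c * q^N * R * (∏ i ∈ Finset.range m, (1 + q^(2*(N-i)-1)*R^2))
              * (1 + q^(2*(N-m)-1)*R^2) := by rw [← hexp]; ring
          _ = c * q^N * R * ∏ i ∈ Finset.range (m+1), (1 + q^(2*(N-i)-1)*R^2) := by
              rw [Finset.prod_range_succ]; ring
  have htendR : Tendsto (fun N : ℕ => q^N * R) atTop (𝓝 0) := by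
    simpa using (tendsto_pow_atTop_nhds_zero_of_lt_one hq0.le hq1).mul_const R
  have hev : ∀ᶠ N : ℕ in atTop, ‖D z‖ ≤ (c * R * Real.exp (R^2*(1-q)⁻¹)) * q^N := by
    filter_upwards [htendR.eventually_le_const (by norm_num : (0:ℝ) < 1)] with N hN
    have h := main N hN N (le_refl N) z (by rw [Nat.sub_self, pow_zero, one_mul])
    calc ‖D z‖ ≤ c * q^N * R * ∏ i ∈ Finset.range N, (1 + q^(2*(N-i)-1)*R^2) := h
      _ ≤ c * q^N * R * Real.exp (R^2*(1-q)⁻¹) := by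
          refine mul_le_mul_of_nonneg_left (prodbound hq0 hq1 R N) (by positivity)
      _ = (c * R * Real.exp (R^2*(1-q)⁻¹)) * q^N := by ring
  have htend : Tendsto (fun N : ℕ => (c * R * Real.exp (R^2*(1-q)⁻¹)) * q^N) atTop (𝓝 0) := by
    simpa using (tendsto_pow_atTop_nhds_zero_of_lt_one hq0.le hq1).const_mul
      (c * R * Real.exp (R^2*(1-q)⁻¹))
  have hle : ‖D z‖ ≤ 0 := ge_of_tendsto htend hev
  exact norm_eq_zero.1 (le_antisymm hle (norm_nonneg _))

lemma G_eq_B (hq0 : 0 < q) (hq1 : q < 1) (z : ℂ) : Gfun q z = Bfun q z := by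
  have h := vanish hq0 hq1 (fun w => Gfun q w - Bfun q w)
    (fun w => by
      have hG := Gfun_feq hq0 hq1 w
      have hB := Bfun_feq hq0 hq1 w
      rw [hG, hB]; ring)
    (smallC q) (smallC_nonneg hq0 hq1)
    (fun w hw => by
      simpa [mul_comm] using small_D hq0 hq1 hw) z
  have h2 : Gfun q z - Bfun q z = 0 := h
  linear_combination h2

end Vanish

theorem Aq_qsquare_identity (q : ℝ) (hq0 : 0 < q) (hq1 : q < 1) (z : ℂ)
    (hz : ∀ m : ℕ, z ≠ (q : ℂ) ^ (-(m : ℤ))) :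
    Aq (q ^ 2) (-z ^ 2 / (q : ℂ)) =
      qpiC (q : ℂ) z *
        ∑' n : ℕ, (q : ℂ) ^ (n * (n - 1) / 2) * z ^ n /
          (qpC (q : ℂ) (q : ℂ) n * qpC (q : ℂ) z n) := by
  have hcast : ((q^2 : ℝ) : ℂ) = (q:ℂ)^2 := by push_cast; ring
  have hL : Aq (q ^ 2) (-z ^ 2 / (q : ℂ)) = Bfun q z := by
    rw [Aq, Bfun]
    apply tsum_congr
    intro k
    rw [tfun, hcast, show -(-z^2/(q:ℂ)) = z^2/(q:ℂ) by ring]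
  have hPzne : ∀ n : ℕ, qpC (q:ℂ) z n ≠ 0 := by
    intro n
    rw [qpC]
    apply Finset.prod_ne_zero_iff.2
    intro k _
    intro h0
    apply hz k
    have hQk : (q:ℂ)^k ≠ 0 := pow_ne_zero k (Qne hq0)
    have hzk : z * (q:ℂ)^k = 1 := by linear_combination -h0
    rw [zpow_neg, zpow_natCast]
    field_simp
    linear_combination hzk
  have hR : qpiC (q : ℂ) z *
      (∑' n : ℕ, (q : ℂ) ^ (n * (n - 1) / 2) * z ^ n /
        (qpC (q : ℂ) (q : ℂ) n * qpC (q : ℂ) z n)) = Gfun q z := by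
    rw [← tsum_mul_left, Gfun]
    apply tsum_congr
    intro n
    rw [gfun, qpiC_split_n hq0 hq1 z n]
    have hP := qpC_qq_ne hq0 hq1 n
    have hPz := hPzne n
    field_simp
  rw [hL, hR, G_eq_B hq0 hq1 z]
end

section
/- For 0 < q < 1 and every positive integer n, ∑_{k=0}^∞ q^{k(k+1)/2} A_q(q^{k-2n-1})/(q;q)_k = 0, where A_q(z) = ∑_{m=0}^∞ q^{m²}(-z)^m/(q;q)_m. -/
noncomputable def qp (q a : ℝ) (n : ℕ) : ℝ := ∏ k ∈ Finset.range n, (1 - a * q ^ k)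

noncomputable def AqR (q z : ℝ) : ℝ := ∑' k : ℕ, q ^ (k ^ 2) * (-z) ^ k / qp q q k

namespace AqAux

lemma qp_succ (q a : ℝ) (n : ℕ) : qp q a (n+1) = qp q a n * (1 - a * q ^ n) :=
  Finset.prod_range_succ _ _

lemma qp_q_pos {q : ℝ} (hq0 : 0 < q) (hq1 : q < 1) (n : ℕ) : 0 < qp q q n := by
  apply Finset.prod_pos
  intro k _
  have h1 : q ^ k ≤ 1 := pow_le_one₀ hq0.le hq1.le
  nlinarith

lemma qp_negq_pos {q : ℝ} (hq0 : 0 < q) (n : ℕ) : 0 < qp q (-q) n := by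
  apply Finset.prod_pos
  intro k _
  have : 0 < q * q ^ k := by positivity
  nlinarith

lemma summable_master {q : ℝ} (hq0 : 0 < q) (hq1 : q < 1) {t : ℝ} (ht : 0 ≤ t)
    (e : ℕ → ℕ) (he : ∀ k, e k + k ≤ e (k+1)) :
    Summable (fun k => q ^ (e k) * t ^ k / qp q q k) := by
  apply summable_of_ratio_norm_eventually_le (r := 1/2) (by norm_num)
  have htend : Filter.Tendsto (fun k : ℕ => q ^ k * t) Filter.atTop (nhds 0) := by
    simpa using (tendsto_pow_atTop_nhds_zero_of_lt_one hq0.le hq1).mul_const t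
  have hev : ∀ᶠ k in Filter.atTop, q ^ k * t < (1 - q) / 2 :=
    htend.eventually_lt_const (by linarith)
  filter_upwards [hev] with k hk
  have hc : 0 < qp q q k := qp_q_pos hq0 hq1 k
  have hc' : 0 < qp q q (k+1) := qp_q_pos hq0 hq1 (k+1)
  have hqk1 : q * q ^ k ≤ q := by
    have h1 : q ^ k ≤ 1 := pow_le_one₀ hq0.le hq1.le
    nlinarith
  rw [Real.norm_eq_abs, Real.norm_eq_abs, abs_of_nonneg (by positivity),
    abs_of_nonneg (by positivity)]
  rw [qp_succ]
  have hpow : q ^ (e (k+1)) ≤ q ^ (e k) * q ^ k := by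
    rw [← pow_add]
    exact pow_le_pow_of_le_one hq0.le hq1.le (he k)
  have hden : 0 < qp q q k * (1 - q * q ^ k) := by
    apply mul_pos hc; nlinarith
  rw [div_le_iff₀ hden]
  have hcc : (1:ℝ)/2 * (q ^ e k * t ^ k / qp q q k) * (qp q q k * (1 - q * q ^ k))
      = q ^ e k * t ^ k * ((1 - q * q ^ k) / 2) := by
    field_simp
  rw [hcc]
  calc q ^ e (k + 1) * t ^ (k + 1)
      ≤ (q ^ e k * q ^ k) * (t * t ^ k) := by
        rw [pow_succ']
        apply mul_le_mul_of_nonneg_right hpow (by positivity)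
    _ = (q ^ e k * t ^ k) * (q ^ k * t) := by ring
    _ ≤ (q ^ e k * t ^ k) * ((1 - q) / 2) := by
        apply mul_le_mul_of_nonneg_left hk.le (by positivity)
    _ ≤ q ^ e k * t ^ k * ((1 - q * q ^ k) / 2) := by
        apply mul_le_mul_of_nonneg_left _ (by positivity)
        nlinarith

noncomputable def ff (q t : ℝ) : ℝ := ∑' m : ℕ, q ^ (Nat.choose m 2) * t ^ m / qp q q m

lemma choose_step (m : ℕ) : (m+1).choose 2 = m.choose 2 + m := by
  rw [Nat.choose_succ_succ, Nat.choose_one_right, Nat.add_comm]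

lemma summable_ff {q : ℝ} (hq0 : 0 < q) (hq1 : q < 1) (t : ℝ) :
    Summable (fun m => q ^ (m.choose 2) * t ^ m / qp q q m) := by
  apply Summable.of_norm
  have h := summable_master hq0 hq1 (abs_nonneg t) (fun m => m.choose 2)
    (fun m => by show m.choose 2 + m ≤ (m+1).choose 2; rw [choose_step])
  refine h.congr fun m => ?_
  rw [Real.norm_eq_abs, abs_div, abs_mul, abs_pow, abs_pow, abs_of_pos hq0,
    abs_of_pos (qp_q_pos hq0 hq1 m)]

lemma fe {q : ℝ} (hq0 : 0 < q) (hq1 : q < 1) (t : ℝ) :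
    ff q t = (1 + t) * ff q (q * t) := by
  have hu := summable_ff hq0 hq1 t
  have hv := summable_ff hq0 hq1 (q * t)
  have hw := hu.sub hv
  have hdiff : ff q t - ff q (q * t)
      = ∑' m : ℕ, (q ^ (m.choose 2) * t ^ m / qp q q m
          - q ^ (m.choose 2) * (q * t) ^ m / qp q q m) := (Summable.tsum_sub hu hv).symm
  rw [Summable.tsum_eq_zero_add hw] at hdiff
  have h0 : q ^ ((0:ℕ).choose 2) * t ^ 0 / qp q q 0 - q ^ ((0:ℕ).choose 2) * (q * t) ^ 0 / qp q q 0 = 0 := by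
    simp [qp]
  have hterm : ∀ m : ℕ, q ^ ((m+1).choose 2) * t ^ (m+1) / qp q q (m+1)
      - q ^ ((m+1).choose 2) * (q * t) ^ (m+1) / qp q q (m+1)
      = t * (q ^ (m.choose 2) * (q * t) ^ m / qp q q m) := by
    intro m
    have hc := (qp_q_pos hq0 hq1 m).ne'
    have hf : (1 : ℝ) - q * q ^ m ≠ 0 := by
      have h1 : q ^ m ≤ 1 := pow_le_one₀ hq0.le hq1.le
      nlinarith
    rw [choose_step, qp_succ]
    field_simp
    ring
  rw [h0, zero_add] at hdiff
  have : ∑' m : ℕ, (q ^ ((m+1).choose 2) * t ^ (m+1) / qp q q (m+1)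
      - q ^ ((m+1).choose 2) * (q * t) ^ (m+1) / qp q q (m+1))
      = t * ff q (q * t) := by
    rw [tsum_congr hterm, tsum_mul_left]
    rfl
  rw [this] at hdiff
  have : ff q t = ff q (q*t) + t * ff q (q*t) := by linarith
  rw [this]; ring

lemma ffzero {q : ℝ} (hq0 : 0 < q) (hq1 : q < 1) (j : ℕ) : ff q (-(q ^ j)⁻¹) = 0 := by
  induction j with
  | zero =>
      have h := fe hq0 hq1 (-1)
      simpa using h
  | succ j ih =>
      have h := fe hq0 hq1 (-(q ^ (j+1))⁻¹)
      have hq : q ≠ 0 := hq0.ne'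
      have heq : q * -(q ^ (j+1))⁻¹ = -(q ^ j)⁻¹ := by
        rw [pow_succ', mul_inv]
        field_simp
      rw [heq, ih, mul_zero] at h
      exact h

lemma ff_chain {q : ℝ} (hq0 : 0 < q) (hq1 : q < 1) (m : ℕ) :
    qp q (-q) m * ff q (q ^ (m+1)) = ff q q := by
  induction m with
  | zero => simp [qp]
  | succ m ih =>
      rw [qp_succ]
      have h := fe hq0 hq1 (q ^ (m+1))
      rw [← pow_succ'] at h
      calc qp q (-q) m * (1 - -q * q ^ m) * ff q (q ^ (m + 1 + 1))
          = qp q (-q) m * ((1 + q ^ (m+1)) * ff q (q ^ (m+2))) := by ring_nf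
        _ = qp q (-q) m * ff q (q ^ (m+1)) := by rw [← h]
        _ = ff q q := ih

lemma qp_sq (q : ℝ) (m : ℕ) : qp q q m * qp q (-q) m = qp (q^2) (q^2) m := by
  induction m with
  | zero => simp [qp]
  | succ m ih => rw [qp_succ, qp_succ, qp_succ, ← ih]; ring

lemma choose_sq (m : ℕ) : m ^ 2 = 2 * m.choose 2 + m := by
  induction m with
  | zero => rfl
  | succ m ih => rw [choose_step]; nlinarith [ih]

lemma tri_eq (k : ℕ) : k * (k+1) / 2 = (k+1).choose 2 := by
  rw [Nat.choose_two_right, Nat.add_sub_cancel, Nat.mul_comm]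

end AqAux

noncomputable def Gt (q r : ℝ) (k m : ℕ) : ℝ :=
  (q ^ ((k+1).choose 2) / qp q q k) *
    ((-1)^m * q ^ (m^2) * (q^m)^k * r^m / qp q q m)

set_option maxHeartbeats 1000000 in
open AqAux in
theorem Aq_sum_odd_vanishes (q : ℝ) (hq0 : 0 < q) (hq1 : q < 1) (n : ℕ) (hn : 0 < n) :
    ∑' k : ℕ, q ^ (k * (k + 1) / 2) * AqR q (q ^ ((k : ℤ) - 2 * n - 1)) / qp q q k = 0 := by
  have hq : q ≠ 0 := hq0.ne'
  set r : ℝ := (q ^ (2*n+1))⁻¹ with hr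
  have hr0 : 0 ≤ r := by positivity
  -- Step 1 : rewrite each summand
  have step1 : ∀ k : ℕ, q ^ (k * (k + 1) / 2) * AqR q (q ^ ((k : ℤ) - 2 * n - 1)) / qp q q k
      = ∑' m : ℕ, Gt q r k m := by
    intro k
    have hz : q ^ ((k : ℤ) - 2 * n - 1) = q ^ k * r := by
      rw [hr, show (k : ℤ) - 2*n - 1 = (k : ℤ) - ((2*n+1 : ℕ) : ℤ) by push_cast; ring,
        zpow_sub₀ hq, zpow_natCast, zpow_natCast, div_eq_mul_inv]
    rw [hz, AqR, tri_eq]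
    rw [mul_div_right_comm, ← tsum_mul_left]
    apply tsum_congr
    intro m
    rw [Gt]
    rw [neg_pow, mul_pow, ← pow_mul, Nat.mul_comm k m, pow_mul]
    ring
  -- Summability of the double family
  have hA : Summable (fun k : ℕ => q ^ ((k+1).choose 2) * (1:ℝ)^k / qp q q k) :=
    summable_master hq0 hq1 zero_le_one (fun k => (k+1).choose 2)
      (fun k => by show (k+1).choose 2 + k ≤ (k+2).choose 2; rw [choose_step (k+1)]; omega)
  have hB : Summable (fun m : ℕ => q ^ (m^2) * r^m / qp q q m) :=
    summable_master hq0 hq1 hr0 (fun m => m^2)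
      (fun m => by show m^2 + m ≤ (m+1)^2; nlinarith)
  have hGsum : Summable (Function.uncurry (Gt q r)) := by
    apply Summable.of_norm
    have hprod : Summable (fun p : ℕ × ℕ =>
        (q ^ ((p.1+1).choose 2) * (1:ℝ)^p.1 / qp q q p.1) * (q ^ (p.2^2) * r^p.2 / qp q q p.2)) :=
      hA.mul_of_nonneg hB
        (fun k => by have := qp_q_pos hq0 hq1 k; positivity)
        (fun m => by have := qp_q_pos hq0 hq1 m; positivity)
    apply Summable.of_nonneg_of_le (fun p => norm_nonneg _) _ hprod
    rintro ⟨k, m⟩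
    have hck := qp_q_pos hq0 hq1 k
    have hcm := qp_q_pos hq0 hq1 m
    have h1 : Function.uncurry (Gt q r) (k, m)
        = (-1:ℝ)^m * ((q ^ ((k+1).choose 2) / qp q q k) * (q ^ (m^2) * (q^m)^k * r^m / qp q q m)) := by
      simp only [Function.uncurry, Gt]
      ring
    rw [h1, norm_mul, norm_pow, norm_neg, norm_one, one_pow, one_mul, Real.norm_eq_abs,
      abs_of_nonneg (by positivity)]
    have hle : ((q:ℝ)^m)^k ≤ 1 := pow_le_one₀ (by positivity) (pow_le_one₀ hq0.le hq1.le)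
    calc (q ^ ((k+1).choose 2) / qp q q k) * (q ^ (m^2) * (q^m)^k * r^m / qp q q m)
        ≤ (q ^ ((k+1).choose 2) / qp q q k) * (q ^ (m^2) * 1 * r^m / qp q q m) := by
          gcongr
      _ = (q ^ ((k+1).choose 2) * (1:ℝ)^k / qp q q k) * (q ^ (m^2) * r^m / qp q q m) := by
          ring
  rw [tsum_congr step1, ← Summable.tsum_comm hGsum]
  have step4 : ∀ m : ℕ, (∑' k : ℕ, Gt q r k m)
      = ff q q * (((-1)^m * q ^ (m^2) * r^m / qp q q m) / qp q (-q) m) := by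
    intro m
    have h1 : ∀ k : ℕ, Gt q r k m
        = ((-1)^m * q ^ (m^2) * r^m / qp q q m) * (q ^ (k.choose 2) * (q * q^m) ^ k / qp q q k) := by
      intro k
      rw [Gt, choose_step, pow_add, mul_pow]
      ring
    rw [tsum_congr h1, tsum_mul_left]
    have h2 : (∑' k : ℕ, q ^ (k.choose 2) * (q * q^m) ^ k / qp q q k) = ff q (q * q^m) := rfl
    rw [h2, ← pow_succ']
    have hch := ff_chain hq0 hq1 m
    have hP := (qp_negq_pos hq0 m).ne'
    have h3 : ff q (q ^ (m+1)) = ff q q / qp q (-q) m := by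
      rw [eq_div_iff hP, mul_comm]
      exact hch
    rw [h3]
    ring
  rw [tsum_congr step4, tsum_mul_left]
  have hqr : ((q^2:ℝ)^n)⁻¹ = q * r := by
    rw [hr, ← pow_mul, pow_succ', mul_inv, ← mul_assoc, mul_inv_cancel₀ hq, one_mul]
  have last : (∑' m : ℕ, ((-1)^m * q ^ (m^2) * r^m / qp q q m) / qp q (-q) m)
      = ff (q^2) (-((q^2) ^ n)⁻¹) := by
    rw [ff]
    apply tsum_congr
    intro m
    rw [div_div, qp_sq, hqr,
      show (-(q*r):ℝ)^m = (-1)^m * (q^m * r^m) by rw [neg_pow, mul_pow],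
      show q ^ (m^2) = (q^2) ^ (m.choose 2) * q ^ m by rw [choose_sq, pow_add, pow_mul]]
    ring
  have hq20 : (0:ℝ) < q^2 := by positivity
  have hq21 : q^2 < 1 := by nlinarith
  rw [last, ffzero hq20 hq21 n, mul_zero]
end
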